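/- arXiv:2402.04237 — 4 statements merged into one kernel-verified Lean document; each statement's English description precedes it below -/
import Mathlib

section
/- Let G and G' be finite simple graphs, each on n vertices, and let k be a natural number with k > 3n². If the k-colouring graphs C_k(G) and C_k(G') are isomorphic, then G and G' have the same degree sequence; that is, the multiset of vertex degrees of G equals the multiset of vertex degrees of G'. -/
open SimpleGraph

/-- The `k`-colouring graph of `G`: vertices are proper `k`-colourings of `G`,
two colourings being adjacent iff they differ at exactly one vertex. -/
def colGraph {V : Type*} (G : SimpleGraph V) (k : ℕ) :
    SimpleGraph (G.Coloring (Fin k)) where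
  Adj c c' := ∃! v, c v ≠ c' v
  symm := by
    constructor
    rintro c c' ⟨v, hv, hu⟩
    exact ⟨v, hv.symm, fun w hw => hu w hw.symm⟩
  loopless := by
    constructor
    rintro c ⟨v, hv, -⟩
    exact hv rfl

/-- The generalised chromatic polynomial `π_G^(H)(k)`: the number of vertex subsets of
the `k`-colouring graph of `G` that induce a subgraph isomorphic to `H`. -/
noncomputable def piHG {V W : Type*} (G : SimpleGraph V) (H : SimpleGraph W) (k : ℕ) : ℕ :=
  Nat.card {S : Set (G.Coloring (Fin k)) //
    Nonempty (((colGraph G k).induce S) ≃g H)}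

section Aux

variable {V : Type*} [Fintype V] [DecidableEq V] {k : ℕ} (G : SimpleGraph V) [DecidableRel G.Adj]

namespace ColAux

lemma adj_def (c x : G.Coloring (Fin k)) :
    (colGraph G k).Adj c x ↔ ∃! v, c v ≠ x v := Iff.rfl

/-- The set of colours forbidden when recolouring `v`. -/
def bad (c : G.Coloring (Fin k)) (v : V) : Finset (Fin k) :=
  insert (c v) ((G.neighborFinset v).image c)

lemma card_bad (c : G.Coloring (Fin k)) (v : V) :
    (bad G c v).card = ((G.neighborFinset v).image c).card + 1 := by
  rw [bad, Finset.card_insert_of_notMem]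
  simp only [Finset.mem_image, SimpleGraph.mem_neighborFinset, not_exists, not_and]
  exact fun u hu hc => (c.valid hu) hc.symm

/-- Recolouring `v` with an allowed colour. -/
def upd (c : G.Coloring (Fin k)) (v : V) (a : Fin k) (ha : a ∉ bad G c v) :
    G.Coloring (Fin k) :=
  SimpleGraph.Coloring.mk (Function.update c v a) (by
    intro u w huw
    have h1 : ∀ x, G.Adj v x → c x ≠ a := fun x hx hc =>
      ha (Finset.mem_insert_of_mem (Finset.mem_image.mpr
        ⟨x, (SimpleGraph.mem_neighborFinset G v x).mpr hx, hc⟩))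
    simp only [Function.update_apply]
    split_ifs with hu hw hw
    · subst hu; subst hw; exact absurd huw (G.loopless.irrefl _)
    · subst hu; exact fun hc => h1 w huw hc.symm
    · subst hw; exact fun hc => h1 u huw.symm hc
    · exact c.valid huw)

lemma upd_apply (c : G.Coloring (Fin k)) (v : V) (a : Fin k) (ha : a ∉ bad G c v) (u : V) :
    upd G c v a ha u = Function.update c v a u := rfl

lemma upd_adj (c : G.Coloring (Fin k)) (v : V) (a : Fin k) (ha : a ∉ bad G c v) :
    (colGraph G k).Adj c (upd G c v a ha) := by
  rw [adj_def]
  have hav : a ≠ c v := fun h => ha (h ▸ Finset.mem_insert_self _ _)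
  refine ⟨v, ?_, fun u hu => ?_⟩
  · show c v ≠ upd G c v a ha v
    rw [upd_apply, Function.update_self]
    exact fun h => hav h.symm
  · have hu' : c u ≠ upd G c v a ha u := hu
    by_contra hne
    rw [upd_apply, Function.update_of_ne hne] at hu'
    exact hu' rfl

/-- The unique vertex at which `x` differs from `c`. -/
noncomputable def thevtx (c : G.Coloring (Fin k))
    (x : {x : G.Coloring (Fin k) // (colGraph G k).Adj c x}) : V :=
  ((adj_def G c x.1).mp x.2).exists.choose

lemma diff_thevtx (c : G.Coloring (Fin k))
    (x : {x : G.Coloring (Fin k) // (colGraph G k).Adj c x}) :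
    c (thevtx G c x) ≠ x.1 (thevtx G c x) :=
  ((adj_def G c x.1).mp x.2).exists.choose_spec

lemma eq_of_ne_thevtx (c : G.Coloring (Fin k))
    (x : {x : G.Coloring (Fin k) // (colGraph G k).Adj c x}) {u : V}
    (hu : u ≠ thevtx G c x) : x.1 u = c u := by
  by_contra hne
  exact hu (((adj_def G c x.1).mp x.2).unique (fun h => hne h.symm) (diff_thevtx G c x))

lemma thevtx_eq (c : G.Coloring (Fin k))
    (x : {x : G.Coloring (Fin k) // (colGraph G k).Adj c x}) {v : V}
    (hv : c v ≠ x.1 v) : thevtx G c x = v :=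
  ((adj_def G c x.1).mp x.2).unique (diff_thevtx G c x) hv

/-- The fiber over `v` of the neighbourhood of `c` is in bijection with the available
colours at `v`. -/
noncomputable def fiberEquiv (c : G.Coloring (Fin k)) (v : V) :
    {x : {x : G.Coloring (Fin k) // (colGraph G k).Adj c x} // thevtx G c x = v} ≃
      {a : Fin k // a ∉ bad G c v} where
  toFun x := ⟨x.1.1 v, by
    obtain ⟨x, hx⟩ := x
    simp only [bad, Finset.mem_insert, Finset.mem_image, SimpleGraph.mem_neighborFinset,
      not_or, not_exists, not_and]
    constructor
    · intro h
      exact diff_thevtx G c x (hx ▸ h.symm)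
    · intro u hu hc
      have hune : u ≠ v := fun h => G.loopless.irrefl v (h ▸ hu)
      have h2 : x.1 u = c u := eq_of_ne_thevtx G c x (by rw [hx]; exact hune)
      have h3 : x.1 u ≠ x.1 v := x.1.valid hu.symm
      rw [h2, hc] at h3
      exact h3 rfl⟩
  invFun a := ⟨⟨upd G c v a.1 a.2, upd_adj G c v a.1 a.2⟩, thevtx_eq G c _ (by
    rw [upd_apply, Function.update_self]
    exact fun h => a.2 (h ▸ Finset.mem_insert_self _ _))⟩
  left_inv := by
    rintro ⟨⟨x, hadj⟩, hx⟩
    apply Subtype.ext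
    apply Subtype.ext
    apply DFunLike.ext
    intro u
    rw [upd_apply]
    rcases eq_or_ne u v with rfl | hu
    · rw [Function.update_self]
    · rw [Function.update_of_ne hu]
      exact (eq_of_ne_thevtx G c ⟨x, hadj⟩ (by rw [hx]; exact hu)).symm
  right_inv := by
    rintro ⟨a, ha⟩
    apply Subtype.ext
    show Function.update (⇑c) v a v = a
    rw [Function.update_self]

lemma card_fiber (c : G.Coloring (Fin k)) (v : V) :
    Nat.card {x : {x : G.Coloring (Fin k) // (colGraph G k).Adj c x} // thevtx G c x = v} =
      k - 1 - ((G.neighborFinset v).image c).card := by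
  classical
  rw [Nat.card_congr (fiberEquiv G c v), Nat.card_eq_fintype_card,
    Fintype.card_subtype_compl]
  simp only [Fintype.card_fin, Fintype.card_coe, card_bad]
  omega

lemma nat_card_sigma {ι : Type*} [Fintype ι] (f : ι → Type*) [∀ i, Finite (f i)] :
    Nat.card (Σ i, f i) = ∑ i, Nat.card (f i) := by
  classical
  haveI : ∀ i, Fintype (f i) := fun i => Fintype.ofFinite _
  simp [Nat.card_eq_fintype_card]

lemma card_nbhd (c : G.Coloring (Fin k)) :
    Nat.card {x : G.Coloring (Fin k) // (colGraph G k).Adj c x} =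
      ∑ v, (k - 1 - ((G.neighborFinset v).image c).card) := by
  rw [← Nat.card_congr (Equiv.sigmaFiberEquiv (thevtx G c)), nat_card_sigma]
  exact Finset.sum_congr rfl fun v _ => card_fiber G c v

lemma thevtx_eq_iff (c : G.Coloring (Fin k))
    (x y : {x : G.Coloring (Fin k) // (colGraph G k).Adj c x}) :
    thevtx G c x = thevtx G c y ↔ (x = y ∨ (colGraph G k).Adj x.1 y.1) := by
  constructor
  · intro hxy
    rcases eq_or_ne x y with rfl | hne
    · exact Or.inl rfl
    right
    have hagree : ∀ u, u ≠ thevtx G c y → x.1 u = y.1 u := fun u hu =>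
      (eq_of_ne_thevtx G c x (hxy ▸ hu)).trans (eq_of_ne_thevtx G c y hu).symm
    have hv : x.1 (thevtx G c y) ≠ y.1 (thevtx G c y) := by
      intro hc
      apply hne
      apply Subtype.ext
      apply DFunLike.ext
      intro u
      rcases eq_or_ne u (thevtx G c y) with rfl | hu
      · exact hc
      · exact hagree u hu
    exact (adj_def G _ _).mpr ⟨thevtx G c y, hv, fun u hu => by
      by_contra h
      exact hu (hagree u h)⟩
  · rintro (rfl | hadj)
    · rfl
    · obtain ⟨w, hw, hwu⟩ := (adj_def G x.1 y.1).mp hadj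
      by_contra hne
      have h1 : x.1 (thevtx G c x) ≠ y.1 (thevtx G c x) := by
        rw [eq_of_ne_thevtx G c y hne]
        exact fun h => diff_thevtx G c x h.symm
      have h2 : x.1 (thevtx G c y) ≠ y.1 (thevtx G c y) := by
        rw [eq_of_ne_thevtx G c x (fun h => hne h.symm)]
        exact fun h => diff_thevtx G c y h
      exact hne ((hwu _ h1).trans (hwu _ h2).symm)


/-- An isomorphism of colouring graphs restricts to an equivalence of neighbourhoods. -/
def nbhdEquiv {V V' : Type*} {k : ℕ} {G : SimpleGraph V} {G' : SimpleGraph V'}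
    (φ : colGraph G k ≃g colGraph G' k) (c : G.Coloring (Fin k)) :
    {x : G.Coloring (Fin k) // (colGraph G k).Adj c x} ≃
      {y : G'.Coloring (Fin k) // (colGraph G' k).Adj (φ c) y} where
  toFun x := ⟨φ x.1, φ.map_adj_iff.mpr x.2⟩
  invFun y := ⟨φ.symm y.1, by
    have h2 := φ.symm.map_adj_iff.mpr y.2
    rwa [RelIso.symm_apply_apply] at h2⟩
  left_inv x := Subtype.ext (by simp)
  right_inv y := Subtype.ext (by simp)

@[simp] lemma nbhdEquiv_apply_coe {V V' : Type*} {k : ℕ} {G : SimpleGraph V}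
    {G' : SimpleGraph V'} (φ : colGraph G k ≃g colGraph G' k) (c : G.Coloring (Fin k))
    (x : {x : G.Coloring (Fin k) // (colGraph G k).Adj c x}) :
    ((nbhdEquiv φ c x : {y : G'.Coloring (Fin k) // (colGraph G' k).Adj (φ c) y}) :
      G'.Coloring (Fin k)) = φ x.1 := rfl

end ColAux

end Aux

open ColAux in
/-- For `k > 3n²`, the `k`-colouring graph determines the degree sequence of a graph
on `n` vertices. -/
theorem colouring_graph_determines_degree_sequence {V V' : Type*} [Fintype V] [Fintype V']
    (G : SimpleGraph V) (G' : SimpleGraph V')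
    [DecidableRel G.Adj] [DecidableRel G'.Adj] (n : ℕ)
    (hV : Fintype.card V = n) (hV' : Fintype.card V' = n)
    (k : ℕ) (hk : 3 * n ^ 2 < k)
    (h : Nonempty (colGraph G k ≃g colGraph G' k)) :
    (Finset.univ.val.map fun v => G.degree v) =
      (Finset.univ.val.map fun v => G'.degree v) := by
  classical
  obtain ⟨φ⟩ := h
  have hkn : n < k := by nlinarith
  -- injective colourings of both graphs
  obtain ⟨f⟩ : Nonempty (V ↪ Fin k) :=
    Function.Embedding.nonempty_of_card_le (by rw [hV, Fintype.card_fin]; omega)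
  obtain ⟨f'⟩ : Nonempty (V' ↪ Fin k) :=
    Function.Embedding.nonempty_of_card_le (by rw [hV', Fintype.card_fin]; omega)
  let c₀ : G.Coloring (Fin k) :=
    SimpleGraph.Coloring.mk ⇑f (fun hadj hc => (G.ne_of_adj hadj) (f.injective hc))
  let c₀' : G'.Coloring (Fin k) :=
    SimpleGraph.Coloring.mk ⇑f' (fun hadj hc => (G'.ne_of_adj hadj) (f'.injective hc))
  have himg : ∀ v, ((G.neighborFinset v).image c₀).card = G.degree v := fun v => by
    rw [show ⇑c₀ = ⇑f from rfl, Finset.card_image_of_injective _ f.injective]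
    rfl
  have himg' : ∀ v, ((G'.neighborFinset v).image c₀').card = G'.degree v := fun v => by
    rw [show ⇑c₀' = ⇑f' from rfl, Finset.card_image_of_injective _ f'.injective]
    rfl
  have hdegV : ∀ v : V, G.degree v < n := fun v => hV ▸ G.degree_lt_card_verts v
  have hdegV' : ∀ w : V', G'.degree w < n := fun w => hV' ▸ G'.degree_lt_card_verts w
  -- transport of neighbourhoods
  have hDge' : ∀ c : G'.Coloring (Fin k),
      ∑ w, (k - 1 - G'.degree w) ≤ ∑ w, (k - 1 - ((G'.neighborFinset w).image c).card) :=
    fun c => Finset.sum_le_sum fun w _ =>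
      Nat.sub_le_sub_left (Finset.card_image_le.trans_eq (G'.card_neighborFinset_eq_degree w)) _
  have hDge : ∀ c : G.Coloring (Fin k),
      ∑ v, (k - 1 - G.degree v) ≤ ∑ v, (k - 1 - ((G.neighborFinset v).image c).card) :=
    fun c => Finset.sum_le_sum fun v _ =>
      Nat.sub_le_sub_left (Finset.card_image_le.trans_eq (G.card_neighborFinset_eq_degree v)) _
  have e1 : ∑ w, (k - 1 - ((G'.neighborFinset w).image (φ c₀)).card) =
      ∑ v, (k - 1 - G.degree v) := by
    rw [← card_nbhd G' (φ c₀), ← Nat.card_congr (nbhdEquiv φ c₀), card_nbhd G c₀]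
    exact Finset.sum_congr rfl fun v _ => by rw [himg v]
  have e2 : ∑ v, (k - 1 - ((G.neighborFinset v).image (φ.symm c₀')).card) =
      ∑ w, (k - 1 - G'.degree w) := by
    rw [← card_nbhd G (φ.symm c₀'), ← Nat.card_congr (nbhdEquiv φ.symm c₀'), card_nbhd G' c₀']
    exact Finset.sum_congr rfl fun w _ => by rw [himg' w]
  have hMeq : ∑ v, (k - 1 - G.degree v) = ∑ w, (k - 1 - G'.degree w) := by
    have h1 := hDge' (φ c₀)
    have h2 := hDge (φ.symm c₀')
    rw [e1] at h1
    rw [e2] at h2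
    omega
  -- the colouring φ c₀ has all neighbourhoods rainbow
  have hrain : ∀ w, k - 1 - ((G'.neighborFinset w).image (φ c₀)).card =
      k - 1 - G'.degree w := by
    have := (Finset.sum_eq_sum_iff_of_le (s := Finset.univ)
      (f := fun w => k - 1 - G'.degree w)
      (g := fun w => k - 1 - ((G'.neighborFinset w).image (φ c₀)).card)
      (fun w _ => Nat.sub_le_sub_left
        (Finset.card_image_le.trans_eq (G'.card_neighborFinset_eq_degree w)) _)).mp
      (by rw [e1, hMeq])
    exact fun w => (this w (Finset.mem_univ w)).symm
  -- fiber cardinalities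
  have hfib : ∀ v, Nat.card {x : {x : G.Coloring (Fin k) // (colGraph G k).Adj c₀ x} //
      thevtx G c₀ x = v} = k - 1 - G.degree v := fun v => by
    rw [card_fiber G c₀ v, himg v]
  have hfib' : ∀ w, Nat.card {y : {y : G'.Coloring (Fin k) //
      (colGraph G' k).Adj (φ c₀) y} //
      thevtx G' (φ c₀) y = w} = k - 1 - G'.degree w := fun w => by
    rw [card_fiber G' (φ c₀) w, hrain w]
  -- nonempty fibers
  have hpos : ∀ v : V, 0 < k - 1 - G.degree v := fun v => by
    have := hdegV v; omega
  have hpos' : ∀ w : V', 0 < k - 1 - G'.degree w := fun w => by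
    have := hdegV' w; omega
  have hne : ∀ v : V, Nonempty {x : {x : G.Coloring (Fin k) // (colGraph G k).Adj c₀ x} //
      thevtx G c₀ x = v} := fun v =>
    (Nat.card_pos_iff.mp (by rw [hfib v]; exact hpos v)).1
  have hne' : ∀ w : V', Nonempty {y : {y : G'.Coloring (Fin k) //
      (colGraph G' k).Adj (φ c₀) y} //
      thevtx G' (φ c₀) y = w} := fun w =>
    (Nat.card_pos_iff.mp (by rw [hfib' w]; exact hpos' w)).1
  have xv : ∀ v : V, {x : {x : G.Coloring (Fin k) // (colGraph G k).Adj c₀ x} //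
      thevtx G c₀ x = v} := fun v => (hne v).some
  have yw : ∀ w : V', {y : {y : G'.Coloring (Fin k) // (colGraph G' k).Adj (φ c₀) y} //
      thevtx G' (φ c₀) y = w} := fun w => (hne' w).some
  -- (nbhdEquiv φ c₀) preserves fibers
  have hΦvtx : ∀ x y : {x : G.Coloring (Fin k) // (colGraph G k).Adj c₀ x},
      thevtx G' (φ c₀) ((nbhdEquiv φ c₀) x) = thevtx G' (φ c₀) ((nbhdEquiv φ c₀) y) ↔
        thevtx G c₀ x = thevtx G c₀ y := by
    intro x y
    rw [thevtx_eq_iff, thevtx_eq_iff, nbhdEquiv_apply_coe, nbhdEquiv_apply_coe]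
    constructor
    · rintro (hxy | hadj)
      · exact Or.inl ((nbhdEquiv φ c₀).injective hxy)
      · exact Or.inr (φ.map_adj_iff.mp hadj)
    · rintro (rfl | hadj)
      · exact Or.inl rfl
      · exact Or.inr (φ.map_adj_iff.mpr hadj)
  have hΨvtx : ∀ x y : {y : G'.Coloring (Fin k) // (colGraph G' k).Adj (φ c₀) y},
      thevtx G c₀ ((nbhdEquiv φ c₀).symm x) = thevtx G c₀ ((nbhdEquiv φ c₀).symm y) ↔
        thevtx G' (φ c₀) x = thevtx G' (φ c₀) y := by
    intro x y
    have h3 := hΦvtx ((nbhdEquiv φ c₀).symm x) ((nbhdEquiv φ c₀).symm y)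
    rw [(nbhdEquiv φ c₀).apply_symm_apply, (nbhdEquiv φ c₀).apply_symm_apply] at h3
    exact h3.symm
  -- the degree-preserving bijection
  have hA : ∀ x : {x : G.Coloring (Fin k) // (colGraph G k).Adj c₀ x},
      thevtx G' (φ c₀) ((nbhdEquiv φ c₀) x) =
        thevtx G' (φ c₀) ((nbhdEquiv φ c₀) (xv (thevtx G c₀ x)).1) := fun x =>
    (hΦvtx x (xv (thevtx G c₀ x)).1).mpr ((xv (thevtx G c₀ x)).2.symm)
  have hB : ∀ y : {y : G'.Coloring (Fin k) // (colGraph G' k).Adj (φ c₀) y},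
      thevtx G c₀ ((nbhdEquiv φ c₀).symm y) =
        thevtx G c₀ ((nbhdEquiv φ c₀).symm (yw (thevtx G' (φ c₀) y)).1) := fun y =>
    (hΨvtx y (yw (thevtx G' (φ c₀) y)).1).mpr ((yw (thevtx G' (φ c₀) y)).2.symm)
  have hτσ : ∀ v, thevtx G c₀
      ((nbhdEquiv φ c₀).symm (yw (thevtx G' (φ c₀) ((nbhdEquiv φ c₀) (xv v).1))).1) = v := fun v => by
    have h1 := hB ((nbhdEquiv φ c₀) (xv v).1)
    rw [(nbhdEquiv φ c₀).symm_apply_apply, (xv v).2] at h1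
    exact h1.symm
  have hστ : ∀ w, thevtx G' (φ c₀)
      ((nbhdEquiv φ c₀) (xv (thevtx G c₀ ((nbhdEquiv φ c₀).symm (yw w).1))).1) = w := fun w => by
    have h1 := hA ((nbhdEquiv φ c₀).symm (yw w).1)
    rw [(nbhdEquiv φ c₀).apply_symm_apply, (yw w).2] at h1
    exact h1.symm
  let E : V ≃ V' :=
    ⟨fun v => thevtx G' (φ c₀) ((nbhdEquiv φ c₀) (xv v).1),
     fun w => thevtx G c₀ ((nbhdEquiv φ c₀).symm (yw w).1), hτσ, hστ⟩
  have hEapp : ∀ v, E v = thevtx G' (φ c₀) ((nbhdEquiv φ c₀) (xv v).1) := fun v => rfl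
  -- fibers have equal cardinality
  have hcard : ∀ v, Nat.card {x : {x : G.Coloring (Fin k) // (colGraph G k).Adj c₀ x} //
        thevtx G c₀ x = v} =
      Nat.card {y : {y : G'.Coloring (Fin k) // (colGraph G' k).Adj (φ c₀) y} //
        thevtx G' (φ c₀) y = thevtx G' (φ c₀) ((nbhdEquiv φ c₀) (xv v).1)} := fun v =>
    Nat.card_congr
      { toFun := fun x => ⟨(nbhdEquiv φ c₀) x.1, by
          rw [hA x.1, x.2]⟩
        invFun := fun y => ⟨(nbhdEquiv φ c₀).symm y.1, by
          have h4 := hB y.1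
          rw [y.2] at h4
          rw [h4]
          exact hτσ v⟩
        left_inv := fun x => Subtype.ext (by simp)
        right_inv := fun y => Subtype.ext (by simp) }
  have hdeg : ∀ v, G.degree v = G'.degree (E v) := fun v => by
    have h5 := hcard v
    rw [hfib v, hfib' (thevtx G' (φ c₀) ((nbhdEquiv φ c₀) (xv v).1))] at h5
    have h1 := hdegV v
    have h2 := hdegV' (thevtx G' (φ c₀) ((nbhdEquiv φ c₀) (xv v).1))
    rw [hEapp]
    omega
  -- conclude
  calc (Finset.univ.val.map fun v => G.degree v)
      = Finset.univ.val.map fun v => G'.degree (E v) := Multiset.map_congr rfl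
        (fun v _ => hdeg v)
    _ = (Finset.univ.val.map fun v => E v).map fun w => G'.degree w := by
        rw [Multiset.map_map]; rfl
    _ = Finset.univ.val.map fun w => G'.degree w := by
        have h6 : (Finset.univ.map E.toEmbedding) = (Finset.univ : Finset V') :=
          Finset.map_univ_equiv E
        rw [← h6, Finset.map_val]
        rfl
end

section
/- Let G and G' be finite simple graphs. If for every natural number k the k-colouring graphs C_k(G) and C_k(G') are isomorphic, then G and G' are isomorphic. That is, the collection {C_k(G)}_{k ∈ ℕ} uniquely determines G up to isomorphism. -/
open SimpleGraph

namespace ColAux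

variable {U : Type*} {H : SimpleGraph U} {k : ℕ}

/-- `c'` differs from `c` exactly at `v`. -/
def DiffAt (c c' : H.Coloring (Fin k)) (v : U) : Prop :=
  c v ≠ c' v ∧ ∀ u, u ≠ v → c u = c' u

lemma adj_iff {c c' : H.Coloring (Fin k)} :
    (colGraph H k).Adj c c' ↔ ∃ v, DiffAt c c' v := by
  constructor
  · rintro ⟨v, hv, hu⟩
    exact ⟨v, hv, fun u hu' => by_contra fun hne => hu' (hu u hne)⟩
  · rintro ⟨v, h1, h2⟩
    exact ⟨v, h1, fun u hu => by_contra fun hne => hu (h2 u hne)⟩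

lemma DiffAt.unique {c c' : H.Coloring (Fin k)} {v w : U}
    (h1 : DiffAt c c' v) (h2 : DiffAt c c' w) : v = w := by
  by_contra hne
  exact h1.1 (h2.2 v hne)

lemma DiffAt.symm {c c' : H.Coloring (Fin k)} {v : U}
    (h : DiffAt c c' v) : DiffAt c' c v :=
  ⟨h.1.symm, fun u hu => (h.2 u hu).symm⟩

lemma eq_or_adj_of_diffAt {c c₁ c₂ : H.Coloring (Fin k)} {v : U}
    (h1 : DiffAt c c₁ v) (h2 : DiffAt c c₂ v) :
    c₁ = c₂ ∨ (colGraph H k).Adj c₁ c₂ := by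
  by_cases hv : c₁ v = c₂ v
  · left
    apply DFunLike.ext
    intro u
    by_cases hu : u = v
    · rw [hu, hv]
    · rw [← h1.2 u hu, h2.2 u hu]
  · right
    exact adj_iff.mpr ⟨v, hv, fun u hu => by rw [← h1.2 u hu, h2.2 u hu]⟩

lemma diffAt_eq_of_eq_or_adj {c c₁ c₂ : H.Coloring (Fin k)} {v w : U}
    (h1 : DiffAt c c₁ v) (h2 : DiffAt c c₂ w)
    (h : c₁ = c₂ ∨ (colGraph H k).Adj c₁ c₂) : v = w := by
  by_contra hne
  have hvv : c₁ v ≠ c₂ v := by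
    rw [← h2.2 v hne]
    exact fun hh => h1.1 hh.symm
  have hww : c₁ w ≠ c₂ w := by
    rw [← h1.2 w (Ne.symm hne)]
    exact h2.1
  rcases h with h | h
  · exact hvv (by rw [h])
  · obtain ⟨x, -, hux⟩ := h
    exact hne ((hux v hvv).trans (hux w hww).symm)

end ColAux

namespace ColAux2
open ColAux

variable {U : Type*} [DecidableEq U] {H : SimpleGraph U} {k : ℕ}

/-- Recolour `c` at `v` with colour `α`, assuming `α` avoids the neighbourhood of `v`. -/
def recol (c : H.Coloring (Fin k)) (v : U) (α : Fin k)
    (h : ∀ u, H.Adj v u → α ≠ c u) : H.Coloring (Fin k) :=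
  Coloring.mk (Function.update (⇑c) v α) (by
    intro a b hab
    by_cases ha : a = v
    · subst ha
      by_cases hb : b = a
      · subst hb
        exact absurd hab (H.loopless.irrefl b)
      · rw [Function.update_self, Function.update_of_ne hb]
        exact h b hab
    · by_cases hb : b = v
      · subst hb
        rw [Function.update_of_ne ha, Function.update_self]
        exact (h a hab.symm).symm
      · rw [Function.update_of_ne ha, Function.update_of_ne hb]
        exact c.valid hab)

@[simp] lemma recol_apply (c : H.Coloring (Fin k)) (v : U) (α : Fin k)
    (h : ∀ u, H.Adj v u → α ≠ c u) (u : U) :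
    recol c v α h u = Function.update (⇑c) v α u := rfl

lemma diffAt_recol (c : H.Coloring (Fin k)) (v : U) (α : Fin k)
    (h : ∀ u, H.Adj v u → α ≠ c u) (hv : c v ≠ α) :
    DiffAt c (recol c v α h) v := by
  refine ⟨by simpa using hv, fun u hu => ?_⟩
  simp [Function.update_of_ne hu]

/-- Recolour with a globally fresh colour. -/
def recolF (c : H.Coloring (Fin k)) (α : Fin k) (hα : ∀ u, c u ≠ α) (v : U) :
    H.Coloring (Fin k) :=
  recol c v α (fun u _ => (hα u).symm)

lemma diffAt_recolF (c : H.Coloring (Fin k)) (α : Fin k) (hα : ∀ u, c u ≠ α) (v : U) :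
    DiffAt c (recolF c α hα v) v :=
  diffAt_recol c v α _ (hα v)

lemma adj_recolF (c : H.Coloring (Fin k)) (α : Fin k) (hα : ∀ u, c u ≠ α) (v : U) :
    (colGraph H k).Adj c (recolF c α hα v) :=
  adj_iff.mpr ⟨v, diffAt_recolF c α hα v⟩

lemma recolF_apply_self (c : H.Coloring (Fin k)) (α : Fin k) (hα : ∀ u, c u ≠ α) (v : U) :
    recolF c α hα v v = α := by simp [recolF]

lemma recolF_apply_ne (c : H.Coloring (Fin k)) (α : Fin k) (hα : ∀ u, c u ≠ α) (v u : U)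
    (hu : u ≠ v) : recolF c α hα v u = c u := by
  simp [recolF, Function.update_of_ne hu]

/-- If `v ~ w` in `H`, the two fresh recolourings at `v` and `w` have `c` as their
unique common neighbour in the colouring graph. -/
lemma uniq_common {c : H.Coloring (Fin k)} {α : Fin k} (hα : ∀ u, c u ≠ α)
    {v w : U} (hvw : H.Adj v w) (d : H.Coloring (Fin k))
    (hd1 : (colGraph H k).Adj d (recolF c α hα v))
    (hd2 : (colGraph H k).Adj d (recolF c α hα w)) : d = c := by
  have hne : v ≠ w := hvw.ne
  obtain ⟨x, hx⟩ := adj_iff.mp hd1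
  obtain ⟨y, hy⟩ := adj_iff.mp hd2
  have hvxy : v = x ∨ v = y := by
    by_contra hc
    push_neg at hc
    have h1 : d v = α := by rw [hx.2 v hc.1, recolF_apply_self]
    have h2 : d v = c v := by rw [hy.2 v hc.2, recolF_apply_ne _ _ _ _ _ hne]
    exact hα v (h1 ▸ h2).symm
  have hwxy : w = x ∨ w = y := by
    by_contra hc
    push_neg at hc
    have h1 : d w = α := by rw [hy.2 w hc.2, recolF_apply_self]
    have h2 : d w = c w := by rw [hx.2 w hc.1, recolF_apply_ne _ _ _ _ _ (Ne.symm hne)]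
    exact hα w (h1 ▸ h2).symm
  rcases hvxy with hv | hv <;> rcases hwxy with hw | hw
  · exact absurd (hv.trans hw.symm) hne
  · -- x = v, y = w : d = c
    subst hv; subst hw
    apply DFunLike.ext
    intro u
    rcases eq_or_ne u v with hu | hu
    · rw [hu, hy.2 v hne, recolF_apply_ne _ _ _ _ _ hne]
    · rcases eq_or_ne u w with hu2 | hu2
      · rw [hu2, hx.2 w (Ne.symm hne), recolF_apply_ne _ _ _ _ _ (Ne.symm hne)]
      · rw [hx.2 u hu, recolF_apply_ne _ _ _ _ _ hu]
  · -- x = w, y = v : contradiction with properness of d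
    exfalso
    subst hv; subst hw
    have h1 : d v = α := by rw [hx.2 v hne, recolF_apply_self]
    have h2 : d w = α := by rw [hy.2 w (Ne.symm hne), recolF_apply_self]
    exact d.valid hvw (h1.trans h2.symm)
  · subst hv; subst hw; exact absurd rfl hne

/-- If `v ≁ w`, any two recolourings of `c` at `v` and at `w` have a second common
neighbour besides `c`. -/
lemma exists_second {c c₁ c₂ : H.Coloring (Fin k)} {v w : U}
    (hvw : ¬ H.Adj v w) (hne : v ≠ w)
    (h1 : DiffAt c c₁ v) (h2 : DiffAt c c₂ w) :
    ∃ d : H.Coloring (Fin k), d ≠ c ∧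
      (colGraph H k).Adj c₁ d ∧ (colGraph H k).Adj c₂ d := by
  have hcompat : ∀ u, H.Adj w u → c₂ w ≠ c₁ u := by
    intro u hu
    have huw : u ≠ w := fun hh => H.loopless.irrefl w (hh ▸ hu)
    have huv : u ≠ v := fun hh => hvw (hh ▸ hu).symm
    rw [← h1.2 u huv, h2.2 u huw]
    exact c₂.valid hu
  refine ⟨recol c₁ w (c₂ w) hcompat, ?_, ?_, ?_⟩
  · intro hd
    have : c v = c₁ v := by
      conv_lhs => rw [← hd]
      simp [Function.update_of_ne hne]
    exact h1.1 this
  · refine adj_iff.mpr ⟨w, ?_, fun u hu => ?_⟩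
    · rw [← h1.2 w (Ne.symm hne)]
      simpa using h2.1
    · simp [Function.update_of_ne hu]
  · refine adj_iff.mpr ⟨v, ?_, fun u hu => ?_⟩
    · rw [← h2.2 v hne]
      simpa [Function.update_of_ne hne] using h1.1
    · rcases eq_or_ne u w with huw | huw
      · rw [huw]; simp
      · rw [← h2.2 u huw, h1.2 u hu]
        simp [Function.update_of_ne huw]

lemma exists_fresh {U' : Type*} [Fintype U'] (hk : Fintype.card U' < k)
    (c : U' → Fin k) : ∃ α : Fin k, ∀ u, c u ≠ α := by
  by_contra hc
  push_neg at hc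
  have hsurj : Function.Surjective c := fun α => hc α
  have := Fintype.card_le_of_surjective c hsurj
  simp at this
  omega

end ColAux2

namespace ColAux3
open ColAux ColAux2

variable {U U' : Type*} [DecidableEq U] [DecidableEq U']
  {H : SimpleGraph U} {H' : SimpleGraph U'} {k : ℕ}

/-- The vertex map induced by an isomorphism of colouring graphs: `v` is sent to the
unique vertex at which `ψ` of the fresh recolouring of `c` at `v` differs from `ψ c`. -/
noncomputable def fmap (ψ : colGraph H k ≃g colGraph H' k)
    (c : H.Coloring (Fin k)) (α : Fin k) (hα : ∀ u, c u ≠ α) (v : U) : U' :=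
  Classical.choose (adj_iff.mp
    (ψ.map_rel_iff.mpr (adj_recolF c α hα v) :
      (colGraph H' k).Adj (ψ c) (ψ (recolF c α hα v))))

lemma fmap_spec (ψ : colGraph H k ≃g colGraph H' k)
    (c : H.Coloring (Fin k)) (α : Fin k) (hα : ∀ u, c u ≠ α) (v : U) :
    DiffAt (ψ c) (ψ (recolF c α hα v)) (fmap ψ c α hα v) :=
  Classical.choose_spec (adj_iff.mp
    (ψ.map_rel_iff.mpr (adj_recolF c α hα v) :
      (colGraph H' k).Adj (ψ c) (ψ (recolF c α hα v))))

lemma keydiff (ψ : colGraph H k ≃g colGraph H' k)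
    (c : H.Coloring (Fin k)) (α : Fin k) (hα : ∀ u, c u ≠ α)
    {c₁ : H.Coloring (Fin k)} {v : U} (h : DiffAt c c₁ v) :
    DiffAt (ψ c) (ψ c₁) (fmap ψ c α hα v) := by
  have h0 := diffAt_recolF c α hα v
  have heq : ψ (recolF c α hα v) = ψ c₁ ∨
      (colGraph H' k).Adj (ψ (recolF c α hα v)) (ψ c₁) :=
    (eq_or_adj_of_diffAt h0 h).imp (congrArg ψ) ψ.map_rel_iff.mpr
  obtain ⟨y, hy⟩ := adj_iff.mp
    (ψ.map_rel_iff.mpr (adj_iff.mpr ⟨v, h⟩) : (colGraph H' k).Adj (ψ c) (ψ c₁))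
  have hxy : fmap ψ c α hα v = y :=
    diffAt_eq_of_eq_or_adj (fmap_spec ψ c α hα v) hy heq
  rwa [← hxy] at hy

lemma fmap_inj (ψ : colGraph H k ≃g colGraph H' k)
    (c : H.Coloring (Fin k)) (α : Fin k) (hα : ∀ u, c u ≠ α) :
    Function.Injective (fmap ψ c α hα) := by
  intro v w h
  have hw' : DiffAt (ψ c) (ψ (recolF c α hα w)) (fmap ψ c α hα v) := by
    rw [h]; exact fmap_spec ψ c α hα w
  have heq := eq_or_adj_of_diffAt (fmap_spec ψ c α hα v) hw'
  exact diffAt_eq_of_eq_or_adj (diffAt_recolF c α hα v) (diffAt_recolF c α hα w)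
    (heq.imp (fun e => ψ.injective e) (fun a => ψ.map_rel_iff.mp a))

lemma fmap_adj (ψ : colGraph H k ≃g colGraph H' k)
    (c : H.Coloring (Fin k)) (α : Fin k) (hα : ∀ u, c u ≠ α)
    {v w : U} (hvw : H.Adj v w) :
    H'.Adj (fmap ψ c α hα v) (fmap ψ c α hα w) := by
  by_contra hcon
  have hne' : fmap ψ c α hα v ≠ fmap ψ c α hα w :=
    fun e => hvw.ne (fmap_inj ψ c α hα e)
  obtain ⟨d', hd'ne, hd'1, hd'2⟩ :=
    exists_second hcon hne' (fmap_spec ψ c α hα v) (fmap_spec ψ c α hα w)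
  have h1 : (colGraph H k).Adj (ψ.symm d') (recolF c α hα v) := by
    have : (colGraph H' k).Adj (ψ (recolF c α hα v)) (ψ (ψ.symm d')) := by
      rwa [RelIso.apply_symm_apply]
    exact (ψ.map_rel_iff.mp this).symm
  have h2 : (colGraph H k).Adj (ψ.symm d') (recolF c α hα w) := by
    have : (colGraph H' k).Adj (ψ (recolF c α hα w)) (ψ (ψ.symm d')) := by
      rwa [RelIso.apply_symm_apply]
    exact (ψ.map_rel_iff.mp this).symm
  have hc : ψ.symm d' = c := uniq_common hα hvw (ψ.symm d') h1 h2
  apply hd'ne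
  rw [← RelIso.apply_symm_apply ψ d', hc]

lemma fmap_comp (ψ : colGraph H k ≃g colGraph H' k)
    (c : H.Coloring (Fin k)) (α : Fin k) (hα : ∀ u, c u ≠ α)
    (c' : H'.Coloring (Fin k)) (hc' : ψ c = c')
    (β : Fin k) (hβ : ∀ u, c' u ≠ β) (v : U) :
    fmap ψ.symm c' β hβ (fmap ψ c α hα v) = v := by
  subst hc'
  have h1 : DiffAt (ψ c) (ψ (recolF c α hα v)) (fmap ψ c α hα v) :=
    fmap_spec ψ c α hα v
  have h2 := keydiff ψ.symm (ψ c) β hβ h1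
  rw [RelIso.symm_apply_apply, RelIso.symm_apply_apply] at h2
  exact (DiffAt.unique h2 (diffAt_recolF c α hα v))

end ColAux3


/-- The collection of all colouring graphs `{C_k(G)}_{k ∈ ℕ}` determines `G` up to
isomorphism. -/
theorem colouring_graphs_determine_graph {V V' : Type*} [Fintype V] [Fintype V']
    (G : SimpleGraph V) (G' : SimpleGraph V')
    (h : ∀ k : ℕ, Nonempty (colGraph G k ≃g colGraph G' k)) :
    Nonempty (G ≃g G') := by

  classical
  open ColAux ColAux2 ColAux3 in
  set k : ℕ := Fintype.card V + Fintype.card V' + 1 with hk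
  obtain ⟨φ⟩ := h k
  have hcard : Fintype.card V ≤ k := by omega
  let e : V ↪ Fin k := (Fintype.equivFin V).toEmbedding.trans (Fin.castLEEmb hcard)
  let c : G.Coloring (Fin k) := Coloring.mk e (fun hadj he => hadj.ne (e.injective he))
  obtain ⟨α, hα⟩ := exists_fresh (show Fintype.card V < k by omega) ⇑c
  obtain ⟨β, hβ⟩ := exists_fresh (show Fintype.card V' < k by omega) ⇑(φ c)
  let f := fmap φ c α hα
  let g := fmap φ.symm (φ c) β hβ
  have hgf : ∀ v, g (f v) = v := fun v => fmap_comp φ c α hα (φ c) rfl β hβ v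
  have hfg : ∀ w, f (g w) = w := by
    intro w
    have : g (f (g w)) = g w := hgf (g w)
    exact fmap_inj φ.symm (φ c) β hβ this
  refine ⟨⟨Equiv.mk f g hgf hfg, ?_⟩⟩
  intro v w
  show G'.Adj (f v) (f w) ↔ G.Adj v w
  constructor
  · intro hadj
    have h2 : G.Adj (g (f v)) (g (f w)) := fmap_adj φ.symm (φ c) β hβ hadj
    rwa [hgf v, hgf w] at h2
  · exact fun hvw => fmap_adj φ c α hα hvw
end

section
/- For every natural number m there exists a pair of non-isomorphic finite simple graphs G and G' such that for every connected finite simple graph H with at most m edges and for every natural number k, π_G^(H)(k) = π_{G'}^(H)(k). -/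
open SimpleGraph

namespace CPNC

/-- number of vertices -/
def N (m : ℕ) : ℕ := 2 * m + 12
/-- the centre: `G` misses edge `(A-1, A)`, `G'` misses `(A, A+1)` -/
def A (m : ℕ) : ℕ := m + 5

lemma A_lt (m : ℕ) : A m < N m := by simp [A, N]; omega

/-- the "line" graph on `Fin (N m)` with consecutive edges, except the edge `(p-1,p)` removed -/
def Gl (m p : ℕ) : SimpleGraph (Fin (N m)) :=
  fromRel (fun u v => (u : ℕ) + 1 = (v : ℕ) ∧ (v : ℕ) ≠ p)

lemma gl_adj {m p : ℕ} {u v : Fin (N m)} :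
    (Gl m p).Adj u v ↔
      (((u:ℕ)+1 = (v:ℕ) ∧ (v:ℕ) ≠ p) ∨ ((v:ℕ)+1 = (u:ℕ) ∧ (u:ℕ) ≠ p)) := by
  simp only [Gl, fromRel_adj]
  constructor
  · rintro ⟨-, h⟩; exact h
  · rintro h
    refine ⟨?_, h⟩
    rcases h with ⟨h1, -⟩ | ⟨h1, -⟩ <;>
      · intro e
        rw [e] at h1
        omega

/-- left read-position -/
def pL (m j : ℕ) : Fin (N m) := ⟨A m - 1 - j, by simp only [A, N]; omega⟩
/-- right read-position -/
def pR (m j : ℕ) : Fin (N m) := ⟨A m + 1 + min j (m+1), by simp only [A, N]; omega⟩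

lemma pL_val (m j : ℕ) : (pL m j : ℕ) = A m - 1 - j := rfl
lemma pR_val {m j : ℕ} (hj : j ≤ m + 1) : (pR m j : ℕ) = A m + 1 + j := by
  simp [pR, min_eq_left hj]

/-- the segment `[A-j, A+j]` -/
def InSeg (m j : ℕ) (v : Fin (N m)) : Prop := A m - j ≤ (v:ℕ) ∧ (v:ℕ) ≤ A m + j

instance (m j : ℕ) (v : Fin (N m)) : Decidable (InSeg m j v) := by
  unfold InSeg; infer_instance

/-- reflection of the segment `[A-j, A+j]`, identity outside -/
def rho (m j : ℕ) (v : Fin (N m)) : Fin (N m) :=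
  if InSeg m j v then ⟨2 * A m - (v:ℕ), by simp only [A, N]; omega⟩ else v

lemma rho_val_of_seg {m j : ℕ} {v : Fin (N m)} (h : InSeg m j v) :
    (rho m j v : ℕ) = 2 * A m - (v:ℕ) := by simp [rho, h]

lemma rho_of_not_seg {m j : ℕ} {v : Fin (N m)} (h : ¬ InSeg m j v) :
    rho m j v = v := by simp [rho, h]

lemma rho_seg_iff {m j : ℕ} (hj : j ≤ m + 1) (v : Fin (N m)) :
    InSeg m j (rho m j v) ↔ InSeg m j v := by
  by_cases h : InSeg m j v
  · simp only [h, iff_true]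
    obtain ⟨h1, h2⟩ := h
    constructor <;> rw [rho_val_of_seg ⟨h1, h2⟩] <;> omega
  · rw [rho_of_not_seg h]

lemma rho_rho {m j : ℕ} (hj : j ≤ m + 1) (v : Fin (N m)) :
    rho m j (rho m j v) = v := by
  by_cases h : InSeg m j v
  · have h' : InSeg m j (rho m j v) := (rho_seg_iff hj v).mpr h
    apply Fin.ext
    rw [rho_val_of_seg h', rho_val_of_seg h]
    obtain ⟨h1, h2⟩ := h
    simp only [A, N] at *
    omega
  · rw [rho_of_not_seg h, rho_of_not_seg h]

/-- the move: reflect the segment and transpose the two boundary colours -/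
def MoveF (m : ℕ) (k : ℕ) (j : ℕ) (c : Fin (N m) → Fin k) : Fin (N m) → Fin k :=
  fun v => if InSeg m j v
    then Equiv.swap (c (pL m j)) (c (pR m j)) (c (rho m j v)) else c v

lemma moveF_of_seg {m k j : ℕ} {c : Fin (N m) → Fin k} {v : Fin (N m)} (h : InSeg m j v) :
    MoveF m k j c v = Equiv.swap (c (pL m j)) (c (pR m j)) (c (rho m j v)) := by
  simp [MoveF, h]

lemma moveF_of_not_seg {m k j : ℕ} {c : Fin (N m) → Fin k} {v : Fin (N m)} (h : ¬ InSeg m j v) :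
    MoveF m k j c v = c v := by simp [MoveF, h]

lemma pL_not_seg {m j : ℕ} (hj : j ≤ m + 1) : ¬ InSeg m j (pL m j) := by
  simp only [InSeg, pL_val, A, not_and]
  omega

lemma pR_not_seg {m j : ℕ} (hj : j ≤ m + 1) : ¬ InSeg m j (pR m j) := by
  simp only [InSeg, pR_val hj, A, not_and]
  omega

lemma moveF_moveF {m k j : ℕ} (hj : j ≤ m + 1) (c : Fin (N m) → Fin k) :
    MoveF m k j (MoveF m k j c) = c := by
  funext v
  have hpl : MoveF m k j c (pL m j) = c (pL m j) := moveF_of_not_seg (pL_not_seg hj)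
  have hpr : MoveF m k j c (pR m j) = c (pR m j) := moveF_of_not_seg (pR_not_seg hj)
  by_cases h : InSeg m j v
  · rw [moveF_of_seg h, hpl, hpr, moveF_of_seg ((rho_seg_iff hj v).mpr h), rho_rho hj]
    exact Equiv.swap_apply_self _ _ _
  · rw [moveF_of_not_seg h, moveF_of_not_seg h]


/-- The key properness lemma: the move sends proper colourings of the line with cut `p`
to proper colourings of the line with cut `q`, where `{p,q} = {A, A+1}`. -/
lemma moveF_proper {m k p q j : ℕ}
    (hpq : (p = A m ∧ q = A m + 1) ∨ (p = A m + 1 ∧ q = A m))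
    (hj1 : 1 ≤ j) (hj2 : j ≤ m + 1) (c : Fin (N m) → Fin k)
    (hc : ∀ u v : Fin (N m), (u:ℕ)+1 = (v:ℕ) → (v:ℕ) ≠ p → c u ≠ c v) :
    ∀ u v : Fin (N m), (u:ℕ)+1 = (v:ℕ) → (v:ℕ) ≠ q → MoveF m k j c u ≠ MoveF m k j c v := by
  intro u v huv hvq
  have hA : A m = m + 5 := rfl
  have hN : N m = 2 * m + 12 := rfl
  have hun : (u:ℕ) < N m := u.2
  have hvn : (v:ℕ) < N m := v.2
  have hpq' : p + q = 2 * A m + 1 ∧ A m ≤ p ∧ p ≤ A m + 1 := by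
    rcases hpq with ⟨h1, h2⟩ | ⟨h1, h2⟩ <;> omega
  have hLv : (pL m j : ℕ) = A m - 1 - j := rfl
  have hRv : (pR m j : ℕ) = A m + 1 + j := pR_val hj2
  set w1 : Fin (N m) := ⟨A m + j, by omega⟩ with hw1
  have hw1v : (w1 : ℕ) = A m + j := rfl
  set w2 : Fin (N m) := ⟨A m - j, by omega⟩ with hw2
  have hw2v : (w2 : ℕ) = A m - j := rfl
  -- five cases according to the position of the consecutive pair (u, u+1)
  rcases lt_or_ge ((v:ℕ)) (A m - j) with hcase | hge
  · -- both outside left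
    rw [moveF_of_not_seg (by simp only [InSeg]; omega),
        moveF_of_not_seg (by simp only [InSeg]; omega)]
    exact hc u v huv (by omega)
  rcases eq_or_lt_of_le hge with hcase | hgt
  · -- v = A - j : left boundary
    have hu_out : ¬ InSeg m j u := by simp only [InSeg]; omega
    have hv_in : InSeg m j v := by simp only [InSeg]; omega
    rw [moveF_of_not_seg hu_out, moveF_of_seg hv_in]
    have hu_eq : u = pL m j := by apply Fin.ext; omega
    have hrv : rho m j v = w1 := by
      apply Fin.ext; rw [rho_val_of_seg hv_in]; omega
    have hstep : c w1 ≠ c (pR m j) := hc w1 (pR m j) (by omega) (by omega)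
    rw [hu_eq, hrv]
    intro hEq
    apply hstep
    apply (Equiv.swap (c (pL m j)) (c (pR m j))).injective
    rw [Equiv.swap_apply_right]
    exact hEq.symm
  rcases le_or_gt ((v:ℕ)) (A m + j) with hcase | hbig
  · -- both inside
    have hu_in : InSeg m j u := by simp only [InSeg]; omega
    have hv_in : InSeg m j v := by simp only [InSeg]; omega
    rw [moveF_of_seg hu_in, moveF_of_seg hv_in]
    intro hEq
    have h2 : c (rho m j u) = c (rho m j v) :=
      (Equiv.swap (c (pL m j)) (c (pR m j))).injective hEq
    have hru : (rho m j u : ℕ) = 2 * A m - (u:ℕ) := rho_val_of_seg hu_in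
    have hrv : (rho m j v : ℕ) = 2 * A m - (v:ℕ) := rho_val_of_seg hv_in
    exact hc (rho m j v) (rho m j u) (by omega) (by omega) h2.symm
  rcases Nat.lt_or_ge (A m + j + 1) ((v:ℕ)) with hbig2 | hcase
  · -- both outside right
    rw [moveF_of_not_seg (by simp only [InSeg]; omega),
        moveF_of_not_seg (by simp only [InSeg]; omega)]
    exact hc u v huv (by omega)
  · -- v = A + j + 1 : right boundary
    have hveq : (v:ℕ) = A m + j + 1 := by omega
    have hu_in : InSeg m j u := by simp only [InSeg]; omega
    have hv_out : ¬ InSeg m j v := by simp only [InSeg]; omega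
    rw [moveF_of_seg hu_in, moveF_of_not_seg hv_out]
    have hv_eq : v = pR m j := by apply Fin.ext; omega
    have hru : rho m j u = w2 := by
      apply Fin.ext; rw [rho_val_of_seg hu_in]; omega
    have hstep : c (pL m j) ≠ c w2 := hc (pL m j) w2 (by omega) (by omega)
    rw [hv_eq, hru]
    intro hEq
    apply hstep
    apply (Equiv.swap (c (pL m j)) (c (pR m j))).injective
    rw [Equiv.swap_apply_left]
    exact hEq.symm

/-- difference transport: if `c, d` agree at the two read-positions then the moved
colourings differ exactly at the reflections of where `c, d` differ. -/
lemma moveF_diff {m k j : ℕ} (hj2 : j ≤ m + 1) (c d : Fin (N m) → Fin k)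
    (hL : c (pL m j) = d (pL m j)) (hR : c (pR m j) = d (pR m j)) (v : Fin (N m)) :
    (MoveF m k j c v ≠ MoveF m k j d v ↔ c (rho m j v) ≠ d (rho m j v)) := by
  by_cases h : InSeg m j v
  · rw [moveF_of_seg h, moveF_of_seg h, hL, hR]
    exact (Equiv.swap (d (pL m j)) (d (pR m j))).injective.ne_iff
  · rw [moveF_of_not_seg h, moveF_of_not_seg h, rho_of_not_seg h]

/-- the colouring-level move, from cut `p` to cut `q` -/
def MoveC {m k p q : ℕ} (hpq : (p = A m ∧ q = A m + 1) ∨ (p = A m + 1 ∧ q = A m))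
    (j : ℕ) (hj1 : 1 ≤ j) (hj2 : j ≤ m + 1) (c : (Gl m p).Coloring (Fin k)) :
    (Gl m q).Coloring (Fin k) :=
  Coloring.mk (MoveF m k j ⇑c) (by
    intro u v hadj
    have hc : ∀ u v : Fin (N m), (u:ℕ)+1 = (v:ℕ) → (v:ℕ) ≠ p → c u ≠ c v := by
      intro u v h1 h2
      exact c.valid (gl_adj.mpr (Or.inl ⟨h1, h2⟩))
    rcases gl_adj.mp hadj with ⟨h1, h2⟩ | ⟨h1, h2⟩
    · exact moveF_proper hpq hj1 hj2 (⇑c) hc u v h1 h2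
    · exact (moveF_proper hpq hj1 hj2 (⇑c) hc v u h1 h2).symm)

lemma moveC_coe {m k p q : ℕ} (hpq) (j : ℕ) (hj1 : 1 ≤ j) (hj2 : j ≤ m + 1)
    (c : (Gl m p).Coloring (Fin k)) :
    ⇑(MoveC (m := m) (k := k) (p := p) (q := q) hpq j hj1 hj2 c) = MoveF m k j ⇑c := rfl

lemma moveC_moveC {m k p q : ℕ} (hpq : (p = A m ∧ q = A m + 1) ∨ (p = A m + 1 ∧ q = A m))
    (hpq' : (q = A m ∧ p = A m + 1) ∨ (q = A m + 1 ∧ p = A m))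
    (j : ℕ) (hj1 : 1 ≤ j) (hj2 : j ≤ m + 1) (c : (Gl m p).Coloring (Fin k)) :
    MoveC hpq' j hj1 hj2 (MoveC hpq j hj1 hj2 c) = c := by
  apply DFunLike.ext
  intro v
  have : ⇑(MoveC hpq' j hj1 hj2 (MoveC hpq j hj1 hj2 c)) = MoveF m k j (MoveF m k j ⇑c) := rfl
  rw [this, moveF_moveF hj2]

section Sets

variable {m k p q : ℕ}

/-- the set of vertices where colourings of `S` disagree -/
def DS (S : Set ((Gl m p).Coloring (Fin k))) : Set (Fin (N m)) :=
  {v | ∃ c ∈ S, ∃ d ∈ S, c v ≠ d v}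

lemma DS_agree {S : Set ((Gl m p).Coloring (Fin k))} {v : Fin (N m)} (h : v ∉ DS S)
    {c d : (Gl m p).Coloring (Fin k)} (hc : c ∈ S) (hd : d ∈ S) : c v = d v := by
  by_contra hne
  exact h ⟨c, hc, d, hd, hne⟩

/-- a good reflection parameter for `S` -/
def validj (S : Set ((Gl m p).Coloring (Fin k))) (j : ℕ) : Prop :=
  1 ≤ j ∧ j ≤ m + 1 ∧ pL m j ∉ DS S ∧ pR m j ∉ DS S

/-- the canonical (least) good reflection parameter -/
noncomputable def jj (S : Set ((Gl m p).Coloring (Fin k))) : ℕ := by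
  classical
  exact if h : ∃ j, validj S j then Nat.find h else 1

lemma jj_spec {S : Set ((Gl m p).Coloring (Fin k))} (h : ∃ j, validj S j) :
    validj S (jj S) ∧ ∀ i < jj S, ¬ validj S i := by
  classical
  unfold jj
  rw [dif_pos h]
  exact ⟨Nat.find_spec h, fun i hi => Nat.find_min h hi⟩

lemma jj_ge1 (S : Set ((Gl m p).Coloring (Fin k))) : 1 ≤ jj S := by
  classical
  unfold jj
  split
  · rename_i h
    exact (Nat.find_spec h).1
  · exact le_refl 1

lemma jj_le (S : Set ((Gl m p).Coloring (Fin k))) : jj S ≤ m + 1 := by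
  classical
  unfold jj
  split
  · rename_i h
    exact (Nat.find_spec h).2.1
  · omega

/-- moving a whole set of colourings -/
def MSet (hpq : (p = A m ∧ q = A m + 1) ∨ (p = A m + 1 ∧ q = A m))
    (S : Set ((Gl m p).Coloring (Fin k))) : Set ((Gl m q).Coloring (Fin k)) :=
  (MoveC hpq (jj S) (jj_ge1 S) (jj_le S)) '' S

lemma mem_DS_MSet (hpq : (p = A m ∧ q = A m + 1) ∨ (p = A m + 1 ∧ q = A m))
    {S : Set ((Gl m p).Coloring (Fin k))}
    (hL : pL m (jj S) ∉ DS S) (hR : pR m (jj S) ∉ DS S) (v : Fin (N m)) :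
    v ∈ DS (MSet hpq S) ↔ rho m (jj S) v ∈ DS S := by
  constructor
  · rintro ⟨c', ⟨c, hc, rfl⟩, d', ⟨d, hd, rfl⟩, hne⟩
    refine ⟨c, hc, d, hd, ?_⟩
    rw [moveC_coe] at hne
    exact (moveF_diff (jj_le S) (⇑c) (⇑d) (DS_agree hL hc hd) (DS_agree hR hc hd) v).mp hne
  · rintro ⟨c, hc, d, hd, hne⟩
    refine ⟨_, ⟨c, hc, rfl⟩, _, ⟨d, hd, rfl⟩, ?_⟩
    rw [moveC_coe, moveC_coe]
    exact (moveF_diff (jj_le S) (⇑c) (⇑d) (DS_agree hL hc hd) (DS_agree hR hc hd) v).mpr hne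

lemma validj_MSet (hpq : (p = A m ∧ q = A m + 1) ∨ (p = A m + 1 ∧ q = A m))
    {S : Set ((Gl m p).Coloring (Fin k))}
    (hL : pL m (jj S) ∉ DS S) (hR : pR m (jj S) ∉ DS S)
    {i : ℕ} (hle : i ≤ jj S) (hi1 : 1 ≤ i) :
    (validj (MSet hpq S) i ↔ validj S i) := by
  have hA : A m = m + 5 := rfl
  have hN : N m = 2 * m + 12 := rfl
  have hij : i ≤ m + 1 := le_trans hle (jj_le S)
  rcases eq_or_lt_of_le hle with heq | hlt
  · -- i = jj S : the read positions are outside the segment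
    subst heq
    have h1 : rho m (jj S) (pL m (jj S)) = pL m (jj S) := rho_of_not_seg (pL_not_seg (jj_le S))
    have h2 : rho m (jj S) (pR m (jj S)) = pR m (jj S) := rho_of_not_seg (pR_not_seg (jj_le S))
    unfold validj
    rw [mem_DS_MSet hpq hL hR, mem_DS_MSet hpq hL hR, h1, h2]
  · -- i < jj S : the read positions are inside the segment and are swapped by rho
    have hjj := jj_le S
    have hseg1 : InSeg m (jj S) (pL m i) := by
      simp only [InSeg, pL_val]; omega
    have hseg2 : InSeg m (jj S) (pR m i) := by
      simp only [InSeg, pR_val hij]; omega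
    have h1 : rho m (jj S) (pL m i) = pR m i := by
      apply Fin.ext
      rw [rho_val_of_seg hseg1, pL_val, pR_val hij]; omega
    have h2 : rho m (jj S) (pR m i) = pL m i := by
      apply Fin.ext
      rw [rho_val_of_seg hseg2, pL_val, pR_val hij]; omega
    unfold validj
    rw [mem_DS_MSet hpq hL hR, mem_DS_MSet hpq hL hR, h1, h2]
    tauto

lemma jj_MSet (hpq : (p = A m ∧ q = A m + 1) ∨ (p = A m + 1 ∧ q = A m))
    {S : Set ((Gl m p).Coloring (Fin k))} (h : ∃ j, validj S j) :
    jj (MSet hpq S) = jj S := by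
  classical
  obtain ⟨hv, hmin⟩ := jj_spec h
  have hL := hv.2.2.1
  have hR := hv.2.2.2
  have hvalid' : validj (MSet hpq S) (jj S) :=
    (validj_MSet hpq hL hR (le_refl _) (jj_ge1 S)).mpr hv
  have h' : ∃ j, validj (MSet hpq S) j := ⟨jj S, hvalid'⟩
  unfold jj
  rw [dif_pos h']
  rw [Nat.find_eq_iff h']
  refine ⟨hvalid', ?_⟩
  intro i hi hvi
  rcases Nat.lt_or_ge i 1 with h0 | h1
  · exact absurd hvi.1 (by omega)
  · exact hmin i hi ((validj_MSet hpq hL hR (le_of_lt hi) h1).mp hvi)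

lemma MSet_MSet (hpq : (p = A m ∧ q = A m + 1) ∨ (p = A m + 1 ∧ q = A m))
    (hpq' : (q = A m ∧ p = A m + 1) ∨ (q = A m + 1 ∧ p = A m))
    {S : Set ((Gl m p).Coloring (Fin k))} (h : ∃ j, validj S j) :
    MSet hpq' (MSet hpq S) = S := by
  have hjj : jj (MSet hpq S) = jj S := jj_MSet hpq h
  have e1 : MSet hpq' (MSet hpq S) = (MoveC hpq' (jj (MSet hpq S)) (jj_ge1 _) (jj_le _)) ''
      ((MoveC hpq (jj S) (jj_ge1 S) (jj_le S)) '' S) := rfl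
  rw [e1, ← Set.image_comp]
  have : ∀ c ∈ S, (MoveC hpq' (jj (MSet hpq S)) (jj_ge1 _) (jj_le _) ∘
      MoveC hpq (jj S) (jj_ge1 S) (jj_le S)) c = c := by
    intro c hc
    simp only [Function.comp_apply]
    have hc2 : MoveC hpq' (jj (MSet hpq S)) (jj_ge1 _) (jj_le _)
        (MoveC hpq (jj S) (jj_ge1 S) (jj_le S) c) =
        MoveC hpq' (jj S) (jj_ge1 S) (jj_le S)
        (MoveC hpq (jj S) (jj_ge1 S) (jj_le S) c) := by
      congr 1 <;> rw [hjj]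
    rw [hc2, moveC_moveC]
  rw [Set.image_congr this, Set.image_id']

end Sets

section Copies

variable {m k p q : ℕ}

lemma walk_exists_adj_ne {α γ : Type*} {Γ : SimpleGraph α} (g : α → γ) :
    ∀ {x y : α}, Γ.Walk x y → g x ≠ g y → ∃ z1 z2, Γ.Adj z1 z2 ∧ g z1 ≠ g z2 := by
  intro x y w
  induction w with
  | nil => intro h; exact absurd rfl h
  | @cons u v w h pw ih =>
    intro hne
    by_cases h2 : g u = g v
    · exact ih (fun hvw => hne (h2.trans hvw))
    · exact ⟨u, v, h, h2⟩

instance colFinite : Finite ((Gl m p).Coloring (Fin k)) :=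
  Finite.of_injective (fun c => ⇑c) DFunLike.coe_injective

/-- bounding the number of difference-positions of a copy of `H` -/
lemma DS_ncard_le {W : Type} [Fintype W] {H : SimpleGraph W} (hconn : H.Connected)
    (hHm : H.edgeSet.ncard ≤ m) {S : Set ((Gl m p).Coloring (Fin k))}
    (hiso : Nonempty ((colGraph (Gl m p) k).induce S ≃g H)) : (DS S).ncard ≤ m := by
  classical
  obtain ⟨e⟩ := hiso
  have key : ∀ v : ↥(DS S), ∃ z1 z2 : ↥S,
      ((colGraph (Gl m p) k).induce S).Adj z1 z2 ∧
        (z1 : (Gl m p).Coloring (Fin k)) v.1 ≠ (z2 : (Gl m p).Coloring (Fin k)) v.1 := by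
    rintro ⟨v, c, hc, d, hd, hne⟩
    have hreach : ((colGraph (Gl m p) k).induce S).Reachable ⟨c, hc⟩ ⟨d, hd⟩ := by
      have h1 : H.Reachable (e ⟨c, hc⟩) (e ⟨d, hd⟩) := hconn.preconnected _ _
      have h2 := h1.map e.symm.toHom
      simpa using h2
    obtain ⟨w⟩ := hreach
    exact walk_exists_adj_ne (fun z : ↥S => (z : (Gl m p).Coloring (Fin k)) v) w hne
  choose f1 f2 hadj hne using key
  have hinj : Function.Injective
      (fun v : ↥(DS S) => (⟨s(f1 v, f2 v), ((colGraph (Gl m p) k).induce S).mem_edgeSet.mpr (hadj v)⟩ :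
        ↥((colGraph (Gl m p) k).induce S).edgeSet)) := by
    intro v1 v2 heq
    simp only [Subtype.mk.injEq, Sym2.eq, Sym2.rel_iff', Prod.mk.injEq, Prod.swap_prod_mk] at heq
    have hadj1 : ∃! u, (f1 v1 : (Gl m p).Coloring (Fin k)) u ≠ (f2 v1 : (Gl m p).Coloring (Fin k)) u := hadj v1
    obtain ⟨u, -, huniq⟩ := hadj1
    have h1 : v1.1 = u := huniq v1.1 (hne v1)
    have h2 : v2.1 = u := by
      apply huniq
      rcases heq with ⟨ha, hb⟩ | ⟨ha, hb⟩
      · have := hne v2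
        rw [ha, hb]
        exact this
      · have := hne v2
        rw [ha, hb]
        exact this.symm
    exact Subtype.ext (h1.trans h2.symm)
  have hcard1 : Nat.card ↥(DS S) ≤ Nat.card ↥((colGraph (Gl m p) k).induce S).edgeSet :=
    Nat.card_le_card_of_injective _ hinj
  have hcard2 : Nat.card ↥((colGraph (Gl m p) k).induce S).edgeSet = Nat.card ↥H.edgeSet :=
    Nat.card_congr e.mapEdgeSet
  rw [← Nat.card_coe_set_eq]
  rw [← Nat.card_coe_set_eq] at hHm
  omega


/-- pigeonhole: some reflection parameter avoids the difference positions -/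
lemma exists_validj {S : Set ((Gl m p).Coloring (Fin k))} (h : (DS S).ncard ≤ m) :
    ∃ j, validj S j := by
  classical
  by_contra hno
  push_neg at hno
  have hA : A m = m + 5 := rfl
  have hN : N m = 2 * m + 12 := rfl
  set f : ℕ → Fin (N m) := fun j => if pL m j ∈ DS S then pL m j else pR m j with hf
  have hfin : (DS S).Finite := Set.toFinite _
  have hmaps : ∀ j ∈ Finset.Icc 1 (m+1), f j ∈ hfin.toFinset := by
    intro j hj
    rw [Finset.mem_Icc] at hj
    rw [Set.Finite.mem_toFinset]
    by_cases hp : pL m j ∈ DS S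
    · simp only [hf, if_pos hp]; exact hp
    · simp only [hf, if_neg hp]
      have := hno j
      unfold validj at this
      push_neg at this
      exact this hj.1 hj.2 hp
  have hinj : Set.InjOn f (Finset.Icc 1 (m+1)) := by
    intro j1 hj1 j2 hj2 heq
    rw [Finset.coe_Icc, Set.mem_Icc] at hj1 hj2
    have e1 : (pL m j1 : ℕ) = A m - 1 - j1 := rfl
    have e2 : (pL m j2 : ℕ) = A m - 1 - j2 := rfl
    have e3 : (pR m j1 : ℕ) = A m + 1 + j1 := pR_val hj1.2
    have e4 : (pR m j2 : ℕ) = A m + 1 + j2 := pR_val hj2.2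
    simp only [hf] at heq
    split_ifs at heq <;>
    · have := congrArg Fin.val heq
      omega
  have hcard := Finset.card_le_card_of_injOn f hmaps hinj
  rw [Nat.card_Icc] at hcard
  rw [Set.ncard_eq_toFinset_card' (DS S)] at h
  rw [Set.Finite.card_toFinset] at hcard
  rw [Set.toFinset_card] at h
  omega

/-- the reflection as an equivalence -/
def rhoEquiv (m j : ℕ) (hj : j ≤ m + 1) : Equiv (Fin (N m)) (Fin (N m)) :=
  ⟨rho m j, rho m j, rho_rho hj, rho_rho hj⟩

lemma existsUnique_comp_equiv {α : Type*} (σ : Equiv α α) (P : α → Prop) :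
    (∃! v, P (σ v)) ↔ ∃! v, P v := by
  constructor
  · rintro ⟨v, hv, hu⟩
    refine ⟨σ v, hv, fun w hw => ?_⟩
    have := hu (σ.symm w) (by simpa using hw)
    rw [← this]
    simp
  · rintro ⟨v, hv, hu⟩
    refine ⟨σ.symm v, by simpa using hv, fun w hw => ?_⟩
    have := hu (σ w) hw
    rw [← this]
    simp

/-- moving a copy preserves the induced subgraph up to isomorphism -/
noncomputable def isoMSet (hpq : (p = A m ∧ q = A m + 1) ∨ (p = A m + 1 ∧ q = A m))
    (S : Set ((Gl m p).Coloring (Fin k)))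
    (hL : pL m (jj S) ∉ DS S) (hR : pR m (jj S) ∉ DS S) :
    ((colGraph (Gl m p) k).induce S) ≃g ((colGraph (Gl m q) k).induce (MSet hpq S)) := by
  have hpq' : (q = A m ∧ p = A m + 1) ∨ (q = A m + 1 ∧ p = A m) := by tauto
  have hinj : Function.Injective (MoveC (m:=m) (k:=k) hpq (jj S) (jj_ge1 S) (jj_le S)) := by
    intro c d hcd
    have := congrArg (MoveC hpq' (jj S) (jj_ge1 S) (jj_le S)) hcd
    rwa [moveC_moveC hpq hpq', moveC_moveC hpq hpq'] at this
  refine ⟨Equiv.Set.image _ S hinj, ?_⟩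
  intro x y
  show ((colGraph (Gl m q) k).Adj _ _) ↔ ((colGraph (Gl m p) k).Adj x.1 y.1)
  have hx : ((Equiv.Set.image _ S hinj) x : (Gl m q).Coloring (Fin k)) =
      MoveC hpq (jj S) (jj_ge1 S) (jj_le S) x.1 := rfl
  have hy : ((Equiv.Set.image _ S hinj) y : (Gl m q).Coloring (Fin k)) =
      MoveC hpq (jj S) (jj_ge1 S) (jj_le S) y.1 := rfl
  show (∃! v, (MoveC hpq (jj S) (jj_ge1 S) (jj_le S) x.1) v ≠
      (MoveC hpq (jj S) (jj_ge1 S) (jj_le S) y.1) v) ↔ (∃! v, x.1 v ≠ y.1 v)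
  have hagree1 : (x.1 : (Gl m p).Coloring (Fin k)) (pL m (jj S)) = y.1 (pL m (jj S)) :=
    DS_agree hL x.2 y.2
  have hagree2 : (x.1 : (Gl m p).Coloring (Fin k)) (pR m (jj S)) = y.1 (pR m (jj S)) :=
    DS_agree hR x.2 y.2
  have step : ∀ v, ((MoveC hpq (jj S) (jj_ge1 S) (jj_le S) x.1) v ≠
      (MoveC hpq (jj S) (jj_ge1 S) (jj_le S) y.1) v) ↔
      (x.1 : (Gl m p).Coloring (Fin k)) (rho m (jj S) v) ≠ y.1 (rho m (jj S) v) := by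
    intro v
    rw [moveC_coe, moveC_coe]
    exact moveF_diff (jj_le S) _ _ hagree1 hagree2 v
  constructor
  · rintro h
    have h' : ∃! v, (x.1 : (Gl m p).Coloring (Fin k)) (rho m (jj S) v) ≠ y.1 (rho m (jj S) v) := by
      obtain ⟨v, hv, hu⟩ := h
      exact ⟨v, (step v).mp hv, fun w hw => hu w ((step w).mpr hw)⟩
    exact (existsUnique_comp_equiv (rhoEquiv m (jj S) (jj_le S)) _).mp h'
  · rintro h
    have h' : ∃! v, (x.1 : (Gl m p).Coloring (Fin k)) (rho m (jj S) v) ≠ y.1 (rho m (jj S) v) :=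
      (existsUnique_comp_equiv (rhoEquiv m (jj S) (jj_le S)) _).mpr h
    obtain ⟨v, hv, hu⟩ := h'
    exact ⟨v, (step v).mpr hv, fun w hw => hu w ((step w).mp hw)⟩



end Copies




section Main

variable {m k : ℕ}

/-- the copy-moving map, on the subtype of copies of `H` -/
noncomputable def copyMap {p q : ℕ}
    (hpq : (p = A m ∧ q = A m + 1) ∨ (p = A m + 1 ∧ q = A m))
    {W : Type} [Fintype W] {H : SimpleGraph W} (hconn : H.Connected)
    (hHm : H.edgeSet.ncard ≤ m)
    (X : {S : Set ((Gl m p).Coloring (Fin k)) //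
      Nonempty (((colGraph (Gl m p) k).induce S) ≃g H)}) :
    {T : Set ((Gl m q).Coloring (Fin k)) //
      Nonempty (((colGraph (Gl m q) k).induce T) ≃g H)} := by
  obtain ⟨S, hS⟩ := X
  have hex : ∃ j, validj S j := exists_validj (DS_ncard_le hconn hHm hS)
  have hv := (jj_spec hex).1
  exact ⟨MSet hpq S, ⟨((isoMSet hpq S hv.2.2.1 hv.2.2.2).symm).trans hS.some⟩⟩

lemma copyMap_val {p q : ℕ}
    (hpq : (p = A m ∧ q = A m + 1) ∨ (p = A m + 1 ∧ q = A m))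
    {W : Type} [Fintype W] {H : SimpleGraph W} (hconn : H.Connected)
    (hHm : H.edgeSet.ncard ≤ m)
    (X : {S : Set ((Gl m p).Coloring (Fin k)) //
      Nonempty (((colGraph (Gl m p) k).induce S) ≃g H)}) :
    (copyMap hpq hconn hHm X).1 = MSet hpq X.1 := by
  obtain ⟨S, hS⟩ := X
  rfl

/-- the two generalised chromatic polynomials agree -/
lemma piHG_Gl_eq {W : Type} [Fintype W] {H : SimpleGraph W} (hconn : H.Connected)
    (hHm : H.edgeSet.ncard ≤ m) (k : ℕ) :
    piHG (Gl m (A m)) H k = piHG (Gl m (A m + 1)) H k := by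
  have hpq : ((A m : ℕ) = A m ∧ A m + 1 = A m + 1) ∨ (A m = A m + 1 ∧ A m + 1 = A m) :=
    Or.inl ⟨rfl, rfl⟩
  have hpq' : ((A m + 1 : ℕ) = A m ∧ A m = A m + 1) ∨ (A m + 1 = A m + 1 ∧ A m = A m) :=
    Or.inr ⟨rfl, rfl⟩
  apply Nat.card_congr
  refine ⟨copyMap (k := k) hpq hconn hHm, copyMap (k := k) hpq' hconn hHm, ?_, ?_⟩
  · rintro ⟨S, hS⟩
    have hex : ∃ j, validj S j := exists_validj (DS_ncard_le hconn hHm hS)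
    apply Subtype.ext
    rw [copyMap_val, copyMap_val]
    exact MSet_MSet hpq hpq' hex
  · rintro ⟨S, hS⟩
    have hex : ∃ j, validj S j := exists_validj (DS_ncard_le hconn hHm hS)
    apply Subtype.ext
    rw [copyMap_val, copyMap_val]
    exact MSet_MSet hpq' hpq hex

end Main


section NonIso

variable {m : ℕ}

lemma reach_chain (p : ℕ) (hp : 1 ≤ p) :
    ∀ (d : ℕ) (u : ℕ) (hu : u + d < N m),
      ((u + d < p) ∨ p ≤ u) →
      (Gl m p).Reachable ⟨u, by omega⟩ ⟨u + d, hu⟩ := by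
  intro d
  induction d with
  | zero => intro u hu _; exact Reachable.refl _
  | succ d ih =>
    intro u hu hside
    have h1 : (Gl m p).Reachable ⟨u, by omega⟩ ⟨u + d, by omega⟩ := by
      apply ih
      omega
    apply h1.trans
    apply SimpleGraph.Adj.reachable
    rw [gl_adj]
    left
    constructor
    · simp
      omega
    · show u + (d+1) ≠ p
      omega


lemma reach_side (p : ℕ) (hp1 : 1 ≤ p) (hp2 : p ≤ N m - 1) (u v : Fin (N m)) :
    (Gl m p).Reachable u v ↔ ((u : ℕ) < p ↔ (v : ℕ) < p) := by
  constructor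
  · intro h
    obtain ⟨w⟩ := h
    induction w with
    | nil => rfl
    | @cons x y z hadj w ih =>
      rw [gl_adj] at hadj
      have hxy : ((x:ℕ) < p ↔ (y:ℕ) < p) := by
        rcases hadj with ⟨h1, h2⟩ | ⟨h1, h2⟩ <;> omega
      exact hxy.trans ih
  · intro hside
    rcases le_total ((u:ℕ)) ((v:ℕ)) with hle | hle
    · have hvd : (v:ℕ) = (u:ℕ) + ((v:ℕ) - (u:ℕ)) := by omega
      have h := reach_chain (m := m) p hp1 ((v:ℕ) - (u:ℕ)) (u:ℕ) (by omega) (by omega)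
      have e1 : (⟨(u:ℕ), by omega⟩ : Fin (N m)) = u := by apply Fin.ext; rfl
      have e2 : (⟨(u:ℕ) + ((v:ℕ) - (u:ℕ)), by omega⟩ : Fin (N m)) = v := by
        apply Fin.ext; simp; omega
      rwa [e1, e2] at h
    · have h := reach_chain (m := m) p hp1 ((u:ℕ) - (v:ℕ)) (v:ℕ) (by omega) (by omega)
      have e1 : (⟨(v:ℕ), by omega⟩ : Fin (N m)) = v := by apply Fin.ext; rfl
      have e2 : (⟨(v:ℕ) + ((u:ℕ) - (v:ℕ)), by omega⟩ : Fin (N m)) = u := by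
        apply Fin.ext; simp; omega
      rw [e1, e2] at h
      exact h.symm

lemma card_lt_subtype (p : ℕ) (hp : p ≤ N m) :
    Nat.card {v : Fin (N m) // (v : ℕ) < p} = p := by
  have e : {v : Fin (N m) // (v : ℕ) < p} ≃ Fin p :=
    { toFun := fun x => ⟨x.1.1, x.2⟩
      invFun := fun y => ⟨⟨y.1, by omega⟩, y.2⟩
      left_inv := fun x => by apply Subtype.ext; apply Fin.ext; rfl
      right_inv := fun y => by apply Fin.ext; rfl }
  rw [Nat.card_congr e, Nat.card_eq_fintype_card, Fintype.card_fin]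

lemma card_ge_subtype (p : ℕ) (hp : p ≤ N m) :
    Nat.card {v : Fin (N m) // ¬ ((v : ℕ) < p)} = N m - p := by
  have e : {v : Fin (N m) // ¬ ((v : ℕ) < p)} ≃ Fin (N m - p) :=
    { toFun := fun x => ⟨x.1.1 - p, by
        have := x.1.2
        have := x.2
        omega⟩
      invFun := fun y => ⟨⟨y.1 + p, by
        have := y.2
        omega⟩, by simp⟩
      left_inv := fun x => by
        apply Subtype.ext; apply Fin.ext
        have := x.2
        simp
        omega
      right_inv := fun y => by apply Fin.ext; simp }
  rw [Nat.card_congr e, Nat.card_eq_fintype_card, Fintype.card_fin]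

/-- the number of vertices reachable from a fixed vertex, in `Gl m p` -/
lemma card_reach (p : ℕ) (hp1 : 1 ≤ p) (hp2 : p ≤ N m - 1) (u : Fin (N m)) :
    Nat.card {v : Fin (N m) // (Gl m p).Reachable u v} =
      (if (u : ℕ) < p then p else N m - p) := by
  by_cases hu : (u:ℕ) < p
  · have ecard : Nat.card {v : Fin (N m) // (Gl m p).Reachable u v} =
        Nat.card {v : Fin (N m) // (v:ℕ) < p} := by
      apply Nat.card_congr
      apply Equiv.subtypeEquivRight
      intro v
      rw [reach_side p hp1 hp2]
      tauto
    rw [if_pos hu, ecard, card_lt_subtype p (by omega)]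
  · have ecard : Nat.card {v : Fin (N m) // (Gl m p).Reachable u v} =
        Nat.card {v : Fin (N m) // ¬ ((v:ℕ) < p)} := by
      apply Nat.card_congr
      apply Equiv.subtypeEquivRight
      intro v
      rw [reach_side p hp1 hp2]
      tauto
    rw [if_neg hu, ecard, card_ge_subtype p (by omega)]

lemma noniso : IsEmpty ((Gl m (A m)) ≃g (Gl m (A m + 1))) := by
  constructor
  intro f
  have hA : A m = m + 5 := rfl
  have hN : N m = 2 * m + 12 := rfl
  set u₀ : Fin (N m) := ⟨0, by omega⟩ with hu₀
  have e : {v : Fin (N m) // (Gl m (A m)).Reachable u₀ v} ≃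
      {v : Fin (N m) // (Gl m (A m + 1)).Reachable (f u₀) v} := by
    apply Equiv.subtypeEquiv f.toEquiv
    intro v
    constructor
    · intro h
      have := h.map f.toHom
      exact this
    · intro h
      have := h.map f.symm.toHom
      simpa using this
  have c1 := card_reach (m := m) (A m) (by omega) (by omega) u₀
  have c2 := card_reach (m := m) (A m + 1) (by omega) (by omega) (f u₀)
  rw [if_pos (by show (0:ℕ) < A m; omega)] at c1
  rw [Nat.card_congr e, c2] at c1
  split_ifs at c1 <;> omega

end NonIso

end CPNC

/-- For every `m` there are non-isomorphic graphs `G, G'` which agree on the generalised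
chromatic polynomial `π^(H)` for every connected graph `H` with at most `m` edges. -/
theorem connected_polynomials_not_complete (m : ℕ) :
    ∃ (n : ℕ) (G G' : SimpleGraph (Fin n)),
      IsEmpty (G ≃g G') ∧
      ∀ (W : Type) [Fintype W] (H : SimpleGraph W),
        H.Connected → H.edgeSet.ncard ≤ m →
        ∀ k : ℕ, piHG G H k = piHG G' H k := by
  refine ⟨CPNC.N m, CPNC.Gl m (CPNC.A m), CPNC.Gl m (CPNC.A m + 1), CPNC.noniso, ?_⟩
  intro W _ H hconn hHm k
  exact CPNC.piHG_Gl_eq hconn hHm k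
end

section
/- Let H be a finite simple graph. Then there exists a finite collection F of connected finite simple graphs such that the polynomials {π_G^(F)}_{F ∈ F} uniquely determine π_G^(H): for all finite simple graphs G₁ and G₂, if π_{G₁}^(F)(k) = π_{G₂}^(F)(k) for every F ∈ F and every natural number k, then π_{G₁}^(H)(k) = π_{G₂}^(H)(k) for every natural number k. -/
open SimpleGraph

open SimpleGraph

section EmbCard

variable {α β α' β' : Type*}

/-- Number of induced embeddings of `A` into `X`. -/
noncomputable def embCard (A : SimpleGraph α) (X : SimpleGraph β) : ℕ := Nat.card (A ↪g X)

instance embFinite [Finite α] [Finite β] (A : SimpleGraph α) (X : SimpleGraph β) :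
    Finite (A ↪g X) :=
  Finite.of_injective (fun e => (e : α → β)) DFunLike.coe_injective

instance isoFinite [Finite α] [Finite β] (A : SimpleGraph α) (X : SimpleGraph β) :
    Finite (A ≃g X) :=
  Finite.of_injective (fun e => (e : α → β)) DFunLike.coe_injective

/-- Congruence of embedding types along isomorphisms. -/
def embCongr {A : SimpleGraph α} {A' : SimpleGraph α'} {X : SimpleGraph β} {X' : SimpleGraph β'}
    (eA : A ≃g A') (eX : X ≃g X') : (A ↪g X) ≃ (A' ↪g X') where
  toFun f := eX.toEmbedding.comp (f.comp eA.symm.toEmbedding)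
  invFun f := eX.symm.toEmbedding.comp (f.comp eA.toEmbedding)
  left_inv f := by ext a; simp
  right_inv f := by ext a; simp

lemma embCard_congr {A : SimpleGraph α} {A' : SimpleGraph α'} {X : SimpleGraph β}
    {X' : SimpleGraph β'} (eA : A ≃g A') (eX : X ≃g X') : embCard A X = embCard A' X' :=
  Nat.card_congr (embCongr eA eX)

lemma embCard_congr_left {A : SimpleGraph α} {A' : SimpleGraph α'} {X : SimpleGraph β}
    (eA : A ≃g A') : embCard A X = embCard A' X :=
  embCard_congr eA Iso.refl

lemma embCard_of_isEmpty [IsEmpty α] (A : SimpleGraph α) (X : SimpleGraph β) :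
    embCard A X = 1 := by
  have : Unique (A ↪g X) := by
    refine ⟨⟨⟨⟨isEmptyElim, fun a => isEmptyElim a⟩, fun {a} => isEmptyElim a⟩⟩, ?_⟩
    intro f
    ext a
    exact isEmptyElim a
  exact Nat.card_unique

lemma natCard_sigma {ι : Type*} [Fintype ι] (f : ι → Type*) [∀ i, Finite (f i)] :
    Nat.card (Σ i, f i) = ∑ i : ι, Nat.card (f i) := by
  letI : ∀ i, Fintype (f i) := fun i => Fintype.ofFinite _
  simp [Nat.card_eq_fintype_card]

lemma natCard_fiber {A B : Type*} [Finite A] [Fintype B] (g : A → B) :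
    Nat.card A = ∑ b : B, Nat.card {a // g a = b} := by
  rw [Nat.card_congr (Equiv.sigmaFiberEquiv g).symm, natCard_sigma]

end EmbCard


section AutCount

variable {α β : Type*}

/-- From an embedding with range `S`, an isomorphism `X.induce S ≃g A`. -/
noncomputable def rangeIso (A : SimpleGraph α) (X : SimpleGraph β)
    (S : Set β) (fp : {f : A ↪g X // Set.range ⇑f = S}) : X.induce S ≃g A :=
  (RelIso.mk ((Equiv.ofInjective _ fp.1.injective).trans (Equiv.setCongr fp.2))
    (fun {a b} => fp.1.map_rel_iff)).symm

lemma rangeIso_symm_apply (A : SimpleGraph α) (X : SimpleGraph β) (S : Set β)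
    (fp : {f : A ↪g X // Set.range ⇑f = S}) (a : α) :
    ((rangeIso A X S fp).symm a : β) = fp.1 a := rfl

lemma rangeIso_bijective (A : SimpleGraph α) (X : SimpleGraph β) (S : Set β) :
    Function.Bijective (rangeIso A X S) := by
  constructor
  · intro fp fp' h
    have h2 := congrArg RelIso.symm h
    apply Subtype.ext
    ext a
    have := congrArg (fun (e : A ≃g X.induce S) => ((e a : β))) h2
    simpa [rangeIso_symm_apply] using this
  · intro e
    have hrange : Set.range ⇑((SimpleGraph.Embedding.induce S).comp e.symm.toEmbedding) = S := by
      ext x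
      simp only [Set.mem_range, SimpleGraph.Embedding.coe_comp, Function.comp_apply]
      constructor
      · rintro ⟨a, rfl⟩
        exact ((e.symm a : ↥S)).2
      · intro hx
        exact ⟨e ⟨x, hx⟩, by simp⟩
    refine ⟨⟨(SimpleGraph.Embedding.induce S).comp e.symm.toEmbedding, hrange⟩, ?_⟩
    have hsymm : (rangeIso A X S ⟨_, hrange⟩).symm = e.symm := by
      apply DFunLike.ext
      intro a
      apply Subtype.ext
      exact rangeIso_symm_apply A X S ⟨_, hrange⟩ a
    exact congrArg RelIso.symm hsymm

/-- Counting embeddings via automorphisms times induced-subgraph count. -/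
lemma embCard_eq_aut_mul [Finite α] [Finite β] (A : SimpleGraph α) (X : SimpleGraph β) :
    Nat.card (A ↪g X) =
      Nat.card (A ≃g A) * Nat.card {S : Set β // Nonempty (X.induce S ≃g A)} := by
  classical
  letI : Fintype (Set β) := Fintype.ofFinite _
  letI : Fintype β := Fintype.ofFinite _
  have hfib : ∀ S : Set β, Nat.card {f : A ↪g X // Set.range ⇑f = S}
      = if Nonempty (X.induce S ≃g A) then Nat.card (A ≃g A) else 0 := by
    intro S
    rw [Nat.card_congr (Equiv.ofBijective _ (rangeIso_bijective A X S))]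
    by_cases h : Nonempty (X.induce S ≃g A)
    · rw [if_pos h]
      obtain ⟨φ⟩ := h
      refine Nat.card_congr ⟨fun e => φ.symm.trans e, fun g => φ.trans g, ?_, ?_⟩
      · intro e; apply DFunLike.ext; intro a; simp
      · intro g; apply DFunLike.ext; intro a; simp
    · rw [if_neg h]
      have : IsEmpty (X.induce S ≃g A) := not_nonempty_iff.mp h
      simp
  rw [natCard_fiber (A := A ↪g X) (B := Set β) (fun f => Set.range ⇑f)]
  calc (∑ S : Set β, Nat.card {f : A ↪g X // Set.range ⇑f = S})
      = ∑ S : Set β, (if Nonempty (X.induce S ≃g A) then Nat.card (A ≃g A) else 0) :=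
        Finset.sum_congr rfl (fun S _ => hfib S)
    _ = ∑ S ∈ Finset.univ.filter (fun S : Set β => Nonempty (X.induce S ≃g A)),
          Nat.card (A ≃g A) := (Finset.sum_filter _ _).symm
    _ = (Finset.univ.filter (fun S : Set β => Nonempty (X.induce S ≃g A))).card
          * Nat.card (A ≃g A) := by rw [Finset.sum_const, smul_eq_mul]
    _ = Nat.card (A ≃g A) * Nat.card {S : Set β // Nonempty (X.induce S ≃g A)} := by
        have hsub : Nat.card {S : Set β // Nonempty (X.induce S ≃g A)}
            = (Finset.univ.filter (fun S : Set β => Nonempty (X.induce S ≃g A))).card := by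
          rw [Nat.card_eq_fintype_card, Fintype.card_subtype]
        rw [hsub, mul_comm]

end AutCount

section Patterns

variable {α γ β : Type*}

/-- Raw pattern data for a pair of embeddings: an identification relation and a graph. -/
abbrev PatData (α γ : Type*) := ((α ⊕ γ) → (α ⊕ γ) → Prop) × SimpleGraph (α ⊕ γ)

instance patDataFinite [Finite α] [Finite γ] : Finite (PatData α γ) := by
  have : Finite (SimpleGraph (α ⊕ γ)) :=
    Finite.of_injective (fun G => G.Adj) (fun G H h => SimpleGraph.ext h)
  infer_instance

/-- The pattern of a pair of embeddings. -/
def pat {A : SimpleGraph α} {B : SimpleGraph γ} {X : SimpleGraph β}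
    (f : A ↪g X) (g : B ↪g X) : PatData α γ :=
  (fun x y => Sum.elim ⇑f ⇑g x = Sum.elim ⇑f ⇑g y, X.comap (Sum.elim ⇑f ⇑g))

/-- Consistency conditions on pattern data. -/
structure IsCons (A : SimpleGraph α) (B : SimpleGraph γ) (P : PatData α γ) : Prop where
  equiv : Equivalence P.1
  compat : ∀ x x' y y', P.1 x x' → P.1 y y' → (P.2.Adj x y ↔ P.2.Adj x' y')
  left : ∀ i i', P.2.Adj (Sum.inl i) (Sum.inl i') ↔ A.Adj i i'
  right : ∀ j j', P.2.Adj (Sum.inr j) (Sum.inr j') ↔ B.Adj j j'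
  injl : ∀ i i', P.1 (Sum.inl i) (Sum.inl i') → i = i'
  injr : ∀ j j', P.1 (Sum.inr j) (Sum.inr j') → j = j'

lemma isCons_pat {A : SimpleGraph α} {B : SimpleGraph γ} {X : SimpleGraph β}
    (f : A ↪g X) (g : B ↪g X) : IsCons A B (pat f g) where
  equiv := ⟨fun _ => rfl, Eq.symm, Eq.trans⟩
  compat := by
    intro x x' y y' hx hy
    simp only [pat, comap_adj] at *
    rw [hx, hy]
  left := by intro i i'; simpa [pat] using f.map_rel_iff
  right := by intro j j'; simpa [pat] using g.map_rel_iff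
  injl := fun i i' h => f.injective h
  injr := fun j j' h => g.injective h

/-- The setoid of a consistent pattern. -/
def patSetoid {A : SimpleGraph α} {B : SimpleGraph γ} {P : PatData α γ}
    (h : IsCons A B P) : Setoid (α ⊕ γ) := ⟨P.1, h.equiv⟩

/-- The quotient graph of a consistent pattern. -/
def patGraph {A : SimpleGraph α} {B : SimpleGraph γ} {P : PatData α γ}
    (h : IsCons A B P) : SimpleGraph (Quotient (patSetoid h)) where
  Adj x y := Quotient.liftOn₂ x y P.2.Adj
    (fun _ _ _ _ ha hb => propext (h.compat _ _ _ _ ha hb))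
  symm := by
    constructor
    rintro ⟨x⟩ ⟨y⟩ hxy
    exact P.2.adj_symm hxy
  loopless := by
    constructor
    rintro ⟨x⟩ hx
    exact P.2.irrefl hx

@[simp] lemma patGraph_adj {A : SimpleGraph α} {B : SimpleGraph γ} {P : PatData α γ}
    (h : IsCons A B P) (x y : α ⊕ γ) :
    (patGraph h).Adj (Quotient.mk (patSetoid h) x) (Quotient.mk (patSetoid h) y) ↔
      P.2.Adj x y := Iff.rfl

/-- If the identification relation is trivial, the pattern graph is isomorphic to `P.2`. -/
noncomputable def patGraphIso {A : SimpleGraph α} {B : SimpleGraph γ} {P : PatData α γ}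
    (h : IsCons A B P) (hr : ∀ x y, P.1 x y → x = y) : P.2 ≃g patGraph h := by
  refine RelIso.mk (Equiv.ofBijective (Quotient.mk (patSetoid h)) ⟨?_, ?_⟩) ?_
  · intro x y hxy
    exact hr x y (Quotient.exact hxy)
  · exact Quotient.mk_surjective
  · intro x y
    exact Iff.rfl

/-- Left embedding extracted from an embedding of the pattern graph. -/
def embl {A : SimpleGraph α} {B : SimpleGraph γ} {X : SimpleGraph β}
    {P : PatData α γ} (hP : IsCons A B P) (e : patGraph hP ↪g X) : A ↪g X where
  toFun i := e (Quotient.mk (patSetoid hP) (Sum.inl i))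
  inj' i i' hii := hP.injl i i' (Quotient.exact (e.injective hii))
  map_rel_iff' {i i'} := by
    show X.Adj (e _) (e _) ↔ A.Adj i i'
    rw [e.map_rel_iff]
    exact hP.left i i'

/-- Right embedding extracted from an embedding of the pattern graph. -/
def embr {A : SimpleGraph α} {B : SimpleGraph γ} {X : SimpleGraph β}
    {P : PatData α γ} (hP : IsCons A B P) (e : patGraph hP ↪g X) : B ↪g X where
  toFun j := e (Quotient.mk (patSetoid hP) (Sum.inr j))
  inj' j j' hjj := hP.injr j j' (Quotient.exact (e.injective hjj))
  map_rel_iff' {j j'} := by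
    show X.Adj (e _) (e _) ↔ B.Adj j j'
    rw [e.map_rel_iff]
    exact hP.right j j'

lemma elim_embl_embr {A : SimpleGraph α} {B : SimpleGraph γ} {X : SimpleGraph β}
    {P : PatData α γ} (hP : IsCons A B P) (e : patGraph hP ↪g X) (x : α ⊕ γ) :
    Sum.elim ⇑(embl hP e) ⇑(embr hP e) x = e (Quotient.mk (patSetoid hP) x) := by
  rcases x with i | j <;> rfl

lemma pat_embl_embr {A : SimpleGraph α} {B : SimpleGraph γ} {X : SimpleGraph β}
    {P : PatData α γ} (hP : IsCons A B P) (e : patGraph hP ↪g X) :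
    pat (embl hP e) (embr hP e) = P := by
  refine Prod.ext ?_ ?_
  · show (fun x y => Sum.elim ⇑(embl hP e) ⇑(embr hP e) x
      = Sum.elim ⇑(embl hP e) ⇑(embr hP e) y) = P.1
    funext x y
    apply propext
    rw [elim_embl_embr hP e x, elim_embl_embr hP e y]
    constructor
    · intro hxy
      exact Quotient.exact (e.injective hxy)
    · intro hxy
      exact congrArg e (Quotient.sound hxy)
  · show X.comap (Sum.elim ⇑(embl hP e) ⇑(embr hP e)) = P.2
    apply SimpleGraph.ext
    funext x y
    apply propext
    show X.Adj (Sum.elim ⇑(embl hP e) ⇑(embr hP e) x) (Sum.elim ⇑(embl hP e) ⇑(embr hP e) y)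
      ↔ P.2.Adj x y
    rw [elim_embl_embr hP e x, elim_embl_embr hP e y, e.map_rel_iff]
    exact Iff.rfl

/-- The fiber of `pat` over a consistent pattern is equivalent to the embeddings of
the pattern graph. -/
noncomputable def fiberEquivPat {A : SimpleGraph α} {B : SimpleGraph γ} {X : SimpleGraph β}
    (P : PatData α γ) (hP : IsCons A B P) :
    {fg : (A ↪g X) × (B ↪g X) // pat fg.1 fg.2 = P} ≃ (patGraph hP ↪g X) where
  toFun fgp := by
    obtain ⟨⟨f, g⟩, hfg⟩ := fgp
    have h1 : (fun x y => Sum.elim ⇑f ⇑g x = Sum.elim ⇑f ⇑g y) = P.1 := congrArg Prod.fst hfg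
    have h2 : X.comap (Sum.elim ⇑f ⇑g) = P.2 := congrArg Prod.snd hfg
    refine ⟨⟨Quotient.lift (Sum.elim ⇑f ⇑g) ?_, ?_⟩, ?_⟩
    · intro x y hxy
      have hxy' : P.1 x y := hxy
      rw [← h1] at hxy'
      exact hxy'
    · rintro ⟨x⟩ ⟨y⟩ hxy
      refine Quotient.sound ?_
      show P.1 x y
      rw [← h1]
      exact hxy
    · rintro ⟨x⟩ ⟨y⟩
      show X.Adj (Sum.elim ⇑f ⇑g x) (Sum.elim ⇑f ⇑g y) ↔ P.2.Adj x y
      rw [← h2]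
      exact Iff.rfl
  invFun e := ⟨(embl hP e, embr hP e), pat_embl_embr hP e⟩
  left_inv := by
    rintro ⟨⟨f, g⟩, hfg⟩
    apply Subtype.ext
    refine Prod.ext ?_ ?_
    · apply RelEmbedding.ext; intro i; rfl
    · apply RelEmbedding.ext; intro j; rfl
  right_inv := by
    intro e
    apply RelEmbedding.ext
    rintro ⟨x⟩
    rcases x with i | j <;> rfl

end Patterns
section Measure

variable {V V' : Type*}

/-- Number of non-adjacent ordered pairs (including diagonal). -/
noncomputable def coem (G : SimpleGraph V) : ℕ :=
  Nat.card {p : V × V // ¬ G.Adj p.1 p.2}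

lemma coem_congr [Finite V] {G : SimpleGraph V} {G' : SimpleGraph V'} (e : G ≃g G') :
    coem G = coem G' := by
  refine Nat.card_congr (Equiv.subtypeEquiv (Equiv.prodCongr e.toEquiv e.toEquiv) ?_)
  intro p
  simp only [Equiv.prodCongr_apply, Prod.map]
  rw [not_iff_not]
  exact e.map_adj_iff.symm

lemma coem_le [Fintype V] (G : SimpleGraph V) :
    coem G ≤ Fintype.card V * Fintype.card V := by
  have h1 : coem G ≤ Nat.card (V × V) :=
    Nat.card_le_card_of_injective _ Subtype.val_injective
  rwa [Nat.card_eq_fintype_card, Fintype.card_prod] at h1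

lemma coem_lt [Finite V] {G G' : SimpleGraph V} (hle : ∀ x y, G.Adj x y → G'.Adj x y)
    {x y : V} (h1 : G'.Adj x y) (h2 : ¬ G.Adj x y) : coem G' < coem G := by
  classical
  letI : Fintype V := Fintype.ofFinite V
  rw [coem, coem, Nat.card_eq_fintype_card, Nat.card_eq_fintype_card]
  refine Fintype.card_lt_of_injective_of_notMem
    (fun p : {p : V × V // ¬ G'.Adj p.1 p.2} =>
      (⟨p.1, fun h => p.2 (hle _ _ h)⟩ : {p : V × V // ¬ G.Adj p.1 p.2}))
    ?_ (b := ⟨(x, y), h2⟩) ?_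
  · intro p q hpq
    have hv := congrArg Subtype.val hpq
    exact Subtype.ext hv
  · rintro ⟨⟨p, hp⟩, hq⟩
    have hv : p = (x, y) := congrArg Subtype.val hq
    exact hp (by rw [hv]; exact h1)

/-- The induction measure. -/
noncomputable def meas (n : ℕ) [Fintype V] (G : SimpleGraph V) : ℕ :=
  Fintype.card V * (n * n + 1) + coem G

lemma meas_congr (n : ℕ) [Fintype V] [Fintype V'] {G : SimpleGraph V} {G' : SimpleGraph V'}
    (e : G ≃g G') : meas n G = meas n G' := by
  rw [meas, meas, coem_congr e, Fintype.card_congr e.toEquiv]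

lemma meas_lt_of_card_lt (n : ℕ) [Fintype V] [Fintype V'] (G : SimpleGraph V)
    (G' : SimpleGraph V') (hcard : Fintype.card V' < Fintype.card V)
    (hn : Fintype.card V ≤ n) : meas n G' < meas n G := by
  have h1 : Fintype.card V' ≤ n := le_trans (Nat.le_of_lt hcard) hn
  have h2 : coem G' ≤ n * n := le_trans (coem_le G') (Nat.mul_le_mul h1 h1)
  calc meas n G' = Fintype.card V' * (n * n + 1) + coem G' := rfl
    _ ≤ Fintype.card V' * (n * n + 1) + n * n := by omega
    _ < (Fintype.card V' + 1) * (n * n + 1) := by nlinarith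
    _ ≤ Fintype.card V * (n * n + 1) := Nat.mul_le_mul_right _ hcard
    _ ≤ meas n G := Nat.le_add_right _ _

lemma meas_lt_of_adj_lt (n : ℕ) [Fintype V] {G G' : SimpleGraph V}
    (hle : ∀ x y, G.Adj x y → G'.Adj x y)
    {x y : V} (h1 : G'.Adj x y) (h2 : ¬ G.Adj x y) : meas n G' < meas n G :=
  Nat.add_lt_add_left (coem_lt hle h1 h2) _

end Measure

section FibCard

variable {α γ β : Type*}

noncomputable instance patDataFintype' [Finite α] [Finite γ] : Fintype (PatData α γ) :=
  Fintype.ofFinite _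

/-- Number of pairs of embeddings with a given pattern. -/
noncomputable def fibCard (A : SimpleGraph α) (B : SimpleGraph γ) (X : SimpleGraph β)
    (P : PatData α γ) : ℕ :=
  Nat.card {fg : (A ↪g X) × (B ↪g X) // pat fg.1 fg.2 = P}

lemma pairs_eq_sum [Finite α] [Finite γ] [Finite β] (A : SimpleGraph α) (B : SimpleGraph γ)
    (X : SimpleGraph β) :
    embCard A X * embCard B X = ∑ P : PatData α γ, fibCard A B X P := by
  classical
  rw [embCard, embCard, ← Nat.card_prod]
  exact natCard_fiber (fun fg : (A ↪g X) × (B ↪g X) => pat fg.1 fg.2)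

lemma fibCard_eq_embCard {A : SimpleGraph α} {B : SimpleGraph γ} (X : SimpleGraph β)
    {P : PatData α γ} (hP : IsCons A B P) :
    fibCard A B X P = embCard (patGraph hP) X :=
  Nat.card_congr (fiberEquivPat P hP)

lemma fibCard_of_not_cons {A : SimpleGraph α} {B : SimpleGraph γ} (X : SimpleGraph β)
    {P : PatData α γ} (hP : ¬ IsCons A B P) : fibCard A B X P = 0 := by
  have : IsEmpty {fg : (A ↪g X) × (B ↪g X) // pat fg.1 fg.2 = P} :=
    ⟨fun fgp => hP (fgp.2 ▸ isCons_pat fgp.1.1 fgp.1.2)⟩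
  exact Nat.card_of_isEmpty

/-- Disjoint union of two graphs. -/
def sumG (A : SimpleGraph α) (B : SimpleGraph γ) : SimpleGraph (α ⊕ γ) where
  Adj x y := match x, y with
    | .inl i, .inl i' => A.Adj i i'
    | .inr j, .inr j' => B.Adj j j'
    | .inl _, .inr _ => False
    | .inr _, .inl _ => False
  symm := by constructor; rintro (i | j) (i' | j') h <;> first | exact A.adj_symm h | exact B.adj_symm h | exact h.elim
  loopless := by constructor; rintro (i | j) h <;> first | exact A.irrefl h | exact B.irrefl h

@[simp] lemma sumG_adj_ll {A : SimpleGraph α} {B : SimpleGraph γ} (i i' : α) :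
    (sumG A B).Adj (Sum.inl i) (Sum.inl i') ↔ A.Adj i i' := Iff.rfl
@[simp] lemma sumG_adj_rr {A : SimpleGraph α} {B : SimpleGraph γ} (j j' : γ) :
    (sumG A B).Adj (Sum.inr j) (Sum.inr j') ↔ B.Adj j j' := Iff.rfl
@[simp] lemma sumG_adj_lr {A : SimpleGraph α} {B : SimpleGraph γ} (i : α) (j : γ) :
    ¬ (sumG A B).Adj (Sum.inl i) (Sum.inr j) := fun h => h
@[simp] lemma sumG_adj_rl {A : SimpleGraph α} {B : SimpleGraph γ} (j : γ) (i : α) :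
    ¬ (sumG A B).Adj (Sum.inr j) (Sum.inl i) := fun h => h

/-- The base pattern: no identifications, no cross edges. -/
def basePat (A : SimpleGraph α) (B : SimpleGraph γ) : PatData α γ :=
  (fun x y => x = y, sumG A B)

lemma isCons_basePat (A : SimpleGraph α) (B : SimpleGraph γ) : IsCons A B (basePat A B) where
  equiv := ⟨fun _ => rfl, Eq.symm, Eq.trans⟩
  compat := by rintro x x' y y' rfl rfl; exact Iff.rfl
  left := fun i i' => Iff.rfl
  right := fun j j' => Iff.rfl
  injl := fun i i' h => Sum.inl_injective h
  injr := fun j j' h => Sum.inr_injective h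

lemma fibCard_basePat [Finite α] [Finite γ] (A : SimpleGraph α) (B : SimpleGraph γ)
    (X : SimpleGraph β) :
    fibCard A B X (basePat A B) = embCard (sumG A B) X := by
  rw [fibCard_eq_embCard X (isCons_basePat A B)]
  exact (embCard_congr_left (patGraphIso (isCons_basePat A B) (fun x y h => h))).symm

/-- Consistent patterns extend the disjoint union. -/
lemma cons_adj_le {A : SimpleGraph α} {B : SimpleGraph γ} {P : PatData α γ}
    (hP : IsCons A B P) : ∀ x y, (sumG A B).Adj x y → P.2.Adj x y := by
  rintro (i | j) (i' | j') h
  · exact (hP.left i i').mpr h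
  · exact h.elim
  · exact h.elim
  · exact (hP.right j j').mpr h

end FibCard
section Main

lemma main_induction {β₁ β₂ : Type*} [Finite β₁] [Finite β₂]
    (X₁ : SimpleGraph β₁) (X₂ : SimpleGraph β₂) (n : ℕ)
    (hyp : ∀ t : ℕ, t ≤ n → ∀ K : SimpleGraph (Fin t), K.Connected →
      embCard K X₁ = embCard K X₂) :
    ∀ (M : ℕ) (V : Type) (_ : Fintype V) (K : SimpleGraph V), Fintype.card V ≤ n →
      meas n K ≤ M → embCard K X₁ = embCard K X₂ := by
  intro M
  induction M using Nat.strong_induction_on with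
  | _ M IH =>
  intro V instV K hV hM
  rcases isEmpty_or_nonempty V with hVe | hVne
  · rw [embCard_of_isEmpty, embCard_of_isEmpty]
  classical
  by_cases hc : K.Connected
  · -- connected case: use the hypothesis, transporting to `Fin`
    let ev := Fintype.equivFin V
    let Kf : SimpleGraph (Fin (Fintype.card V)) := K.comap ⇑ev.symm
    have iso : Kf ≃g K := RelIso.mk ev.symm (fun {a b} => Iff.rfl)
    have hKf : Kf.Connected := (iso.connected_iff).mpr hc
    have h := hyp (Fintype.card V) hV Kf hKf
    rwa [embCard_congr_left (X := X₁) iso, embCard_congr_left (X := X₂) iso] at h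
  · -- disconnected case
    rw [connected_iff] at hc
    push_neg at hc
    have hpc' : ¬ ∀ u v : V, K.Reachable u v := fun h => (hc h).false hVne.some
    obtain ⟨u, hu⟩ := not_forall.mp hpc'
    obtain ⟨v, hv⟩ := not_forall.mp hu
    set C : Set V := {w | K.Reachable u w} with hC
    have huC : u ∈ C := Reachable.refl u
    have hvC : v ∈ Cᶜ := hv
    have hcross : ∀ x y : V, x ∈ C → y ∈ Cᶜ → ¬ K.Adj x y := by
      intro x y hx hy hadj
      exact hy (Reachable.trans hx hadj.reachable)
    let A : SimpleGraph ↥C := K.induce C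
    let B : SimpleGraph ↥(Cᶜ) := K.induce Cᶜ
    let eqv : ↥C ⊕ ↥(Cᶜ) ≃ V :=
      { toFun := Sum.elim Subtype.val Subtype.val
        invFun := fun x => if hx : x ∈ C then Sum.inl ⟨x, hx⟩ else Sum.inr ⟨x, hx⟩
        left_inv := by
          rintro (⟨x, hx⟩ | ⟨x, hx⟩) <;> dsimp only [Sum.elim_inl, Sum.elim_inr]
          · rw [dif_pos hx]
          · rw [dif_neg (show ¬ x ∈ C from hx)]
        right_inv := by
          intro x
          dsimp only
          by_cases hx : x ∈ C
          · rw [dif_pos hx]; rfl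
          · rw [dif_neg hx]; rfl }
    have isoK : sumG A B ≃g K := by
      refine RelIso.mk eqv ?_
      rintro (⟨x, hx⟩ | ⟨x, hx⟩) (⟨y, hy⟩ | ⟨y, hy⟩)
      · exact Iff.rfl
      · exact ⟨fun h => (hcross x y hx hy h).elim, False.elim⟩
      · exact ⟨fun h => (hcross y x hy hx h.symm).elim, False.elim⟩
      · exact Iff.rfl
    have hca : Fintype.card ↥C < Fintype.card V :=
      Fintype.card_subtype_lt (x := v) hvC
    have hcb : Fintype.card ↥(Cᶜ) < Fintype.card V :=
      Fintype.card_subtype_lt (x := u) (fun h => h huC)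
    have hA : embCard A X₁ = embCard A X₂ := by
      refine IH (meas n A) (lt_of_lt_of_le (meas_lt_of_card_lt n K A hca hV) hM)
        ↥C inferInstance A (le_trans (le_of_lt hca) hV) (le_refl _)
    have hB : embCard B X₁ = embCard B X₂ := by
      refine IH (meas n B) (lt_of_lt_of_le (meas_lt_of_card_lt n K B hcb hV) hM)
        ↥(Cᶜ) inferInstance B (le_trans (le_of_lt hcb) hV) (le_refl _)
    have hprod : (∑ P : PatData ↥C ↥(Cᶜ), fibCard A B X₁ P)
        = ∑ P : PatData ↥C ↥(Cᶜ), fibCard A B X₂ P := by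
      rw [← pairs_eq_sum, ← pairs_eq_sum, hA, hB]
    have hsum_card : Fintype.card (↥C ⊕ ↥(Cᶜ)) = Fintype.card V := Fintype.card_congr eqv
    have hterm : ∀ P ∈ Finset.univ.erase (basePat A B),
        fibCard A B X₁ P = fibCard A B X₂ P := by
      intro P hPe
      have hPne : P ≠ basePat A B := Finset.ne_of_mem_erase hPe
      by_cases hcons : IsCons A B P
      · rw [fibCard_eq_embCard X₁ hcons, fibCard_eq_embCard X₂ hcons]
        letI : Fintype (Quotient (patSetoid hcons)) := Fintype.ofFinite _
        have hsurj : Function.Surjective (Quotient.mk (patSetoid hcons)) :=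
          fun q => Quotient.exists_rep q
        have hqle : Fintype.card (Quotient (patSetoid hcons)) ≤ Fintype.card (↥C ⊕ ↥(Cᶜ)) :=
          Fintype.card_le_of_surjective _ hsurj
        have hqn : Fintype.card (Quotient (patSetoid hcons)) ≤ n := by
          rw [hsum_card] at hqle
          exact le_trans hqle hV
        rcases lt_or_eq_of_le hqle with hlt | heq
        · rw [hsum_card] at hlt
          exact IH (meas n (patGraph hcons))
            (lt_of_lt_of_le (meas_lt_of_card_lt n K (patGraph hcons) hlt hV) hM)
            _ inferInstance _ hqn (le_refl _)
        · have hbij : Function.Bijective (Quotient.mk (patSetoid hcons)) :=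
            (Fintype.bijective_iff_surjective_and_card _).mpr ⟨hsurj, heq.symm⟩
          have hr : ∀ x y, P.1 x y → x = y := fun x y h => hbij.injective (Quotient.sound h)
          have isoPQ : P.2 ≃g patGraph hcons := patGraphIso hcons hr
          have hle := cons_adj_le hcons
          have hwit : ∃ x y, P.2.Adj x y ∧ ¬ (sumG A B).Adj x y := by
            by_contra hno
            push_neg at hno
            apply hPne
            have h2 : P.2 = sumG A B := by
              ext x y
              exact ⟨fun h => hno x y h, hle x y⟩
            have h1 : P.1 = fun x y => x = y := by
              funext x y
              apply propext
              exact ⟨hr x y, fun h => h ▸ hcons.equiv.refl x⟩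
            exact Prod.ext h1 h2
          obtain ⟨x, y, hxy1, hxy2⟩ := hwit
          have hm1 : meas n P.2 < meas n (sumG A B) := meas_lt_of_adj_lt n hle hxy1 hxy2
          have hm2 : meas n (sumG A B) = meas n K := meas_congr n isoK
          have hm3 : meas n (patGraph hcons) = meas n P.2 := (meas_congr n isoPQ).symm
          refine IH (meas n (patGraph hcons)) ?_ _ inferInstance _ hqn (le_refl _)
          omega
      · rw [fibCard_of_not_cons X₁ hcons, fibCard_of_not_cons X₂ hcons]
    have h1 : fibCard A B X₁ (basePat A B)
        + ∑ P ∈ Finset.univ.erase (basePat A B), fibCard A B X₁ P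
        = ∑ P : PatData ↥C ↥(Cᶜ), fibCard A B X₁ P :=
      Finset.add_sum_erase _ _ (Finset.mem_univ _)
    have h2 : fibCard A B X₂ (basePat A B)
        + ∑ P ∈ Finset.univ.erase (basePat A B), fibCard A B X₂ P
        = ∑ P : PatData ↥C ↥(Cᶜ), fibCard A B X₂ P :=
      Finset.add_sum_erase _ _ (Finset.mem_univ _)
    have hsumerase : (∑ P ∈ Finset.univ.erase (basePat A B), fibCard A B X₁ P)
        = ∑ P ∈ Finset.univ.erase (basePat A B), fibCard A B X₂ P :=
      Finset.sum_congr rfl hterm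
    have hbase : fibCard A B X₁ (basePat A B) = fibCard A B X₂ (basePat A B) := by
      omega
    rw [fibCard_basePat A B X₁, fibCard_basePat A B X₂] at hbase
    calc embCard K X₁ = embCard (sumG A B) X₁ := (embCard_congr_left isoK).symm
      _ = embCard (sumG A B) X₂ := hbase
      _ = embCard K X₂ := embCard_congr_left isoK

end Main

section Final

instance simpleGraphFinite {V : Type*} [Finite V] : Finite (SimpleGraph V) :=
  Finite.of_injective (fun G => G.Adj) (fun G H h => SimpleGraph.ext h)

instance coloringFinite {V : Type*} [Finite V] (G : SimpleGraph V) (k : ℕ) :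
    Finite (G.Coloring (Fin k)) :=
  Finite.of_injective (fun c => (c : V → Fin k)) DFunLike.coe_injective

lemma autCard_pos {α : Type*} [Finite α] (A : SimpleGraph α) : 0 < Nat.card (A ≃g A) := by
  haveI : Nonempty (A ≃g A) := ⟨Iso.refl⟩
  exact Nat.card_pos

lemma embCard_colGraph {V W : Type*} [Finite V] [Finite W] (G : SimpleGraph V)
    (H : SimpleGraph W) (k : ℕ) :
    embCard H (colGraph G k) = Nat.card (H ≃g H) * piHG G H k := by
  rw [embCard, embCard_eq_aut_mul]
  rfl

/-- For every graph `H` there is a finite collection of connected graphs whose generalised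
chromatic polynomials determine `π_G^(H)`. -/
theorem connected_family_determines {W : Type*} [Fintype W] (H : SimpleGraph W) :
    ∃ (s : ℕ) (m : Fin s → ℕ) (F : ∀ i, SimpleGraph (Fin (m i))),
      (∀ i, (F i).Connected) ∧
      ∀ (U₁ U₂ : Type*) [Fintype U₁] [Fintype U₂]
        (G₁ : SimpleGraph U₁) (G₂ : SimpleGraph U₂),
        (∀ i (k : ℕ), piHG G₁ (F i) k = piHG G₂ (F i) k) →
        ∀ k : ℕ, piHG G₁ H k = piHG G₂ H k := by
  classical
  set n := Fintype.card W with hn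
  letI : Fintype (Σ t : Fin (n + 1), {K : SimpleGraph (Fin (t : ℕ)) // K.Connected}) :=
    Fintype.ofFinite _
  set T := Σ t : Fin (n + 1), {K : SimpleGraph (Fin (t : ℕ)) // K.Connected} with hT
  let e : Fin (Fintype.card T) ≃ T := (Fintype.equivFin T).symm
  refine ⟨Fintype.card T, fun i => ((e i).1 : ℕ), fun i => (e i).2.1,
    fun i => (e i).2.2, ?_⟩
  intro U₁ U₂ iU₁ iU₂ G₁ G₂ hFs k
  have hTall : ∀ x : T, piHG G₁ x.2.1 k = piHG G₂ x.2.1 k := by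
    intro x
    rw [← Equiv.apply_symm_apply e x]
    exact hFs (e.symm x) k
  have hyp : ∀ t : ℕ, t ≤ n → ∀ K : SimpleGraph (Fin t), K.Connected →
      embCard K (colGraph G₁ k) = embCard K (colGraph G₂ k) := by
    intro t ht K hK
    have h := hTall ⟨⟨t, Nat.lt_succ_of_le ht⟩, ⟨K, hK⟩⟩
    rw [embCard_colGraph, embCard_colGraph, h]
  -- transport H to `Fin n`
  let HF : SimpleGraph (Fin n) := H.comap ⇑(Fintype.equivFin W).symm
  have isoH : HF ≃g H := RelIso.mk (Fintype.equivFin W).symm (fun {a b} => Iff.rfl)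
  have hmain := main_induction (colGraph G₁ k) (colGraph G₂ k) n hyp
    (meas n HF) (Fin n) inferInstance HF (by simp) (le_refl _)
  have hH : embCard H (colGraph G₁ k) = embCard H (colGraph G₂ k) := by
    rw [← embCard_congr_left (X := colGraph G₁ k) isoH,
        ← embCard_congr_left (X := colGraph G₂ k) isoH]
    exact hmain
  rw [embCard_colGraph, embCard_colGraph] at hH
  exact Nat.eq_of_mul_eq_mul_left (autCard_pos H) hH

end Final
end
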